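/- arXiv:1510.00908 — 4 statements merged into one kernel-verified Lean document; each statement's English description precedes it below -/
import Mathlib

section
/- Under the stated assumptions, for any parameter ζ with R − ζ·1 invertible, the shifted tau-function satisfies τ[ζ]/τ = 1 + ⟨a[ζ]| F B |α⟩ and also τ[ζ]/τ = 1 − ⟨b| G A[ζ] |β⟩; explicitly, det(1 + A(R−ζ)⁻¹ B(L−ζ)) = det(1 + A B)·(1 + ⟨a|(R−ζ)⁻¹ (1+BA)⁻¹ B |α⟩) = det(1 + A B)·(1 − ⟨b| (1+AB)⁻¹ A(R−ζ)⁻¹ |β⟩). -/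
open Matrix

noncomputable section

lemma mul_vecMulVec' {n : ℕ} (M : Matrix (Fin n) (Fin n) ℂ) (u v : Fin n → ℂ) :
    M * vecMulVec u v = vecMulVec (M *ᵥ u) v := by
  ext i j
  simp [mul_apply, vecMulVec_apply, mulVec, dotProduct, Finset.sum_mul, mul_assoc]

lemma vecMulVec_mul' {n : ℕ} (M : Matrix (Fin n) (Fin n) ℂ) (u v : Fin n → ℂ) :
    vecMulVec u v * M = vecMulVec u (v ᵥ* M) := by
  ext i j
  simp [mul_apply, vecMulVec_apply, vecMul, dotProduct, Finset.mul_sum, mul_assoc]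

lemma det_one_add_vecMulVec {n : ℕ} (u v : Fin n → ℂ) :
    (1 + vecMulVec u v).det = 1 + v ⬝ᵥ u := by
  rw [vecMulVec_eq Unit, det_one_add_replicateCol_mul_replicateRow]

/-- for a shift parameter `ζ` with `R − ζ·1` invertible, the shifted
tau-function `τ[ζ] = det(1 + A(R−ζ)⁻¹ B(L−ζ))` satisfies
`τ[ζ] = τ·(1 + ⟨a|(R−ζ)⁻¹(1+BA)⁻¹B|α⟩)` and `τ[ζ] = τ·(1 − ⟨b|(1+AB)⁻¹A(R−ζ)⁻¹|β⟩)`. -/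
theorem statement0 {n : ℕ} (hn : 1 ≤ n) (l r : Fin n → ℂ)
    (hlr : ∀ j k, l j ≠ r k) (α β a b : Fin n → ℂ)
    (A B : Matrix (Fin n) (Fin n) ℂ)
    (hA : Matrix.diagonal l * A - A * Matrix.diagonal r = Matrix.vecMulVec α a)
    (hB : Matrix.diagonal r * B - B * Matrix.diagonal l = Matrix.vecMulVec β b)
    (ζ : ℂ)
    (hζ : IsUnit (Matrix.diagonal r - ζ • (1 : Matrix (Fin n) (Fin n) ℂ)))
    (hinv : IsUnit (1 + A * B))
    (hinv' : IsUnit (1 + A * (Matrix.diagonal r - ζ • 1)⁻¹ *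
        (B * (Matrix.diagonal l - ζ • 1)))) :
    (1 + A * (Matrix.diagonal r - ζ • 1)⁻¹ * (B * (Matrix.diagonal l - ζ • 1))).det
        = (1 + A * B).det *
          (1 + Matrix.vecMul a
            ((Matrix.diagonal r - ζ • 1)⁻¹ * (1 + B * A)⁻¹ * B) ⬝ᵥ α) ∧
    (1 + A * (Matrix.diagonal r - ζ • 1)⁻¹ * (B * (Matrix.diagonal l - ζ • 1))).det
        = (1 + A * B).det *
          (1 - Matrix.vecMul b
            ((1 + A * B)⁻¹ * (A * (Matrix.diagonal r - ζ • 1)⁻¹)) ⬝ᵥ β) := by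
  set Dr := Matrix.diagonal r - ζ • (1 : Matrix (Fin n) (Fin n) ℂ) with hDr
  set Dl := Matrix.diagonal l - ζ • (1 : Matrix (Fin n) (Fin n) ℂ) with hDl
  have hdet : IsUnit Dr.det := (isUnit_iff_isUnit_det _).mp hζ
  have hDrinv : Dr⁻¹ * Dr = 1 := nonsing_inv_mul _ hdet
  have hDrinv' : Dr * Dr⁻¹ = 1 := mul_nonsing_inv _ hdet
  have key1 : B * Dl = Dr * B - vecMulVec β b := by
    rw [hDl, hDr, ← hB]; noncomm_ring
  have key2 : Dl * A = A * Dr + vecMulVec α a := by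
    rw [hDl, hDr, ← hA]; noncomm_ring
  have hABdet : IsUnit (1 + A * B).det := (isUnit_iff_isUnit_det _).mp hinv
  have hBAdet : IsUnit (1 + B * A).det := by
    rwa [det_one_add_mul_comm]
  have hBAinv : (1 + B * A) * (1 + B * A)⁻¹ = 1 := mul_nonsing_inv _ hBAdet
  have hABinv : (1 + A * B) * (1 + A * B)⁻¹ = 1 := mul_nonsing_inv _ hABdet
  constructor
  · -- first equation
    have e1 : 1 + A * Dr⁻¹ * (B * Dl) = 1 + (A * Dr⁻¹) * (B * Dl) := by
      rw [Matrix.mul_assoc]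
    have e2 : (B * Dl) * (A * Dr⁻¹)
        = B * A + vecMulVec (B *ᵥ α) (a ᵥ* Dr⁻¹) := by
      calc (B * Dl) * (A * Dr⁻¹) = B * (Dl * A) * Dr⁻¹ := by noncomm_ring
        _ = B * A * (Dr * Dr⁻¹) + B * vecMulVec α a * Dr⁻¹ := by
            rw [key2]; noncomm_ring
        _ = B * A + vecMulVec (B *ᵥ α) (a ᵥ* Dr⁻¹) := by
            rw [hDrinv', Matrix.mul_one, mul_vecMulVec', vecMulVec_mul']
    rw [e1, det_one_add_mul_comm, e2]
    have e3 : 1 + (B * A + vecMulVec (B *ᵥ α) (a ᵥ* Dr⁻¹))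
        = (1 + B * A) * (1 + (1 + B * A)⁻¹ * vecMulVec (B *ᵥ α) (a ᵥ* Dr⁻¹)) := by
      rw [Matrix.mul_add, Matrix.mul_one, ← Matrix.mul_assoc, hBAinv, Matrix.one_mul,
        add_assoc]
    rw [e3, det_mul, mul_vecMulVec', det_one_add_vecMulVec, det_one_add_mul_comm]
    congr 2
    rw [mulVec_mulVec, dotProduct_mulVec, vecMul_vecMul, Matrix.mul_assoc]
  · -- second equation
    have e2 : A * Dr⁻¹ * (B * Dl) = A * B - vecMulVec ((A * Dr⁻¹) *ᵥ β) b := by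
      rw [Matrix.mul_assoc, key1, Matrix.mul_sub, mul_vecMulVec',
        ← Matrix.mul_assoc (Dr⁻¹), hDrinv, Matrix.one_mul, Matrix.mul_sub,
        mul_vecMulVec', mulVec_mulVec]
    have e3 : 1 + (A * B - vecMulVec ((A * Dr⁻¹) *ᵥ β) b)
        = (1 + A * B) * (1 - (1 + A * B)⁻¹ * vecMulVec ((A * Dr⁻¹) *ᵥ β) b) := by
      rw [Matrix.mul_sub, Matrix.mul_one, ← Matrix.mul_assoc, hABinv, Matrix.one_mul]
      noncomm_ring
    rw [e2, e3, det_mul]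
    congr 1
    have h4 : (1 : Matrix (Fin n) (Fin n) ℂ)
          - (1 + A * B)⁻¹ * vecMulVec ((A * Dr⁻¹) *ᵥ β) b
        = 1 + vecMulVec ((1 + A * B)⁻¹ *ᵥ ((A * Dr⁻¹) *ᵥ β)) (-b) := by
      rw [mul_vecMulVec']
      ext i j
      simp [vecMulVec_apply, sub_eq_add_neg]
    rw [h4, det_one_add_vecMulVec, mulVec_mulVec, neg_dotProduct, dotProduct_mulVec]
    ring
end
end

section
/- Under the stated assumptions, for any finite multisets X, Y of admissible parameters and any admissible parameter ζ, the shifted tau-functions satisfy (τ[X ζ̄] · τ[Y ζ]) / (τ[X] · τ[Y]) = 1 + ⟨a[X]| F[X] · K · G[Y] |α⟩, where K = Δ(R,X,Y)(R−ζ)⁻¹ B[Y] − B[X](L−ζ)⁻¹ and Δ(R,X,Y) = ∏_{ξ∈X}(R−ξ) · ∏_{η∈Y}(R−η)⁻¹. -/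
open Matrix

noncomputable section

/-- The diagonal matrix `∏_{ξ ∈ X} (diagonal d − ξ·1)` for a multiset `X` of parameters. -/
def sProd {n : ℕ} (d : Fin n → ℂ) (X : Multiset ℂ) : Matrix (Fin n) (Fin n) ℂ :=
  Matrix.diagonal fun i => (X.map fun ξ => d i - ξ).prod

/-- The multiset-shifted matrix `A[X] = A·∏_{ξ∈X}(R−ξ)⁻¹`. -/
def shA {n : ℕ} (r : Fin n → ℂ) (A : Matrix (Fin n) (Fin n) ℂ) (X : Multiset ℂ) :
    Matrix (Fin n) (Fin n) ℂ :=
  A * (sProd r X)⁻¹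

/-- The multiset-shifted matrix `B[X] = B·∏_{ξ∈X}(L−ξ)`. -/
def shB {n : ℕ} (l : Fin n → ℂ) (B : Matrix (Fin n) (Fin n) ℂ) (X : Multiset ℂ) :
    Matrix (Fin n) (Fin n) ℂ :=
  B * sProd l X

/-- The shifted tau-function `τ[X] = det(1 + A[X] B[X])`. -/
def shtau {n : ℕ} (l r : Fin n → ℂ) (A B : Matrix (Fin n) (Fin n) ℂ) (X : Multiset ℂ) : ℂ :=
  (1 + shA r A X * shB l B X).det

/-- The shifted tau-function `σ[X] = τ[X]·⟨a[X]|(1+B[X]A[X])⁻¹|β⟩`. -/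
def shsigma {n : ℕ} (l r a β : Fin n → ℂ) (A B : Matrix (Fin n) (Fin n) ℂ)
    (X : Multiset ℂ) : ℂ :=
  shtau l r A B X *
    (Matrix.vecMul (Matrix.vecMul a (sProd r X)⁻¹) (1 + shB l B X * shA r A X)⁻¹ ⬝ᵥ β)

/-- The shifted tau-function `ρ[X] = τ[X]·⟨b[X]|(1+A[X]B[X])⁻¹|α⟩`. -/
def shrho {n : ℕ} (l r b α : Fin n → ℂ) (A B : Matrix (Fin n) (Fin n) ℂ)
    (X : Multiset ℂ) : ℂ :=
  shtau l r A B X *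
    (Matrix.vecMul (Matrix.vecMul b (sProd l X)) (1 + shA r A X * shB l B X)⁻¹ ⬝ᵥ α)

/-- A parameter `ξ` is admissible if `R − ξ·1` and `L − ξ·1` are invertible. -/
def Adm {n : ℕ} (l r : Fin n → ℂ) (ξ : ℂ) : Prop :=
  IsUnit (Matrix.diagonal r - ξ • (1 : Matrix (Fin n) (Fin n) ℂ)) ∧
    IsUnit (Matrix.diagonal l - ξ • (1 : Matrix (Fin n) (Fin n) ℂ))

/-- `Γ_ξ(Y, X) = ∏_{η∈Y}(ξ−η) / ∏_{η∈X, η≠ξ}(ξ−η)`. -/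
def Gam (Y : Multiset ℂ) (X : Finset ℂ) (ξ : ℂ) : ℂ :=
  (Y.map fun η => ξ - η).prod / ∏ η ∈ X.erase ξ, (ξ - η)



lemma diag_sub_smul {n : ℕ} (d : Fin n → ℂ) (ζ : ℂ) :
    Matrix.diagonal d - ζ • (1 : Matrix (Fin n) (Fin n) ℂ)
      = Matrix.diagonal (fun i => d i - ζ) := by
  ext i j
  rcases eq_or_ne i j with h | h
  · subst h; simp
  · simp [Matrix.diagonal_apply_ne _ h, Matrix.one_apply_ne h]

lemma diag_ne_of_isUnit {n : ℕ} {d : Fin n → ℂ} {ξ : ℂ}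
    (h : IsUnit (Matrix.diagonal d - ξ • (1 : Matrix (Fin n) (Fin n) ℂ))) (i : Fin n) :
    d i - ξ ≠ 0 := by
  rw [diag_sub_smul, Matrix.isUnit_iff_isUnit_det, Matrix.det_diagonal] at h
  intro hc
  exact h.ne_zero (Finset.prod_eq_zero (Finset.mem_univ i) hc)

lemma sProd_cons {n : ℕ} (d : Fin n → ℂ) (ζ : ℂ) (Y : Multiset ℂ) :
    sProd d (ζ ::ₘ Y) = (Matrix.diagonal d - ζ • 1) * sProd d Y := by
  rw [diag_sub_smul]
  unfold sProd
  rw [Matrix.diagonal_mul_diagonal]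
  exact congrArg _ (funext fun i => by rw [Multiset.map_cons, Multiset.prod_cons])

lemma sProd_entry_ne {n : ℕ} {l d : Fin n → ℂ} {X : Multiset ℂ}
    (hX : ∀ ξ ∈ X, IsUnit (Matrix.diagonal d - ξ • (1 : Matrix (Fin n) (Fin n) ℂ)))
    (i : Fin n) : (X.map fun ξ => d i - ξ).prod ≠ 0 := by
  rw [Ne, Multiset.prod_eq_zero_iff]
  intro hc
  obtain ⟨ξ, hξ, hz⟩ := Multiset.mem_map.mp hc
  exact diag_ne_of_isUnit (hX ξ hξ) i hz

lemma sProd_det_isUnit {n : ℕ} {d : Fin n → ℂ} {X : Multiset ℂ}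
    (hX : ∀ ξ ∈ X, IsUnit (Matrix.diagonal d - ξ • (1 : Matrix (Fin n) (Fin n) ℂ))) :
    IsUnit (sProd d X).det := by
  rw [sProd, Matrix.det_diagonal, isUnit_iff_ne_zero]
  exact Finset.prod_ne_zero_iff.mpr fun i _ => sProd_entry_ne (l := d) hX i

lemma syl_shift {n : ℕ} (dl dr : Fin n → ℂ) (A P : Matrix (Fin n) (Fin n) ℂ)
    (α a : Fin n → ℂ)
    (hA : Matrix.diagonal dl * A - A * Matrix.diagonal dr = Matrix.vecMulVec α a)
    (hP : P * Matrix.diagonal dr = Matrix.diagonal dr * P) :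
    Matrix.diagonal dl * (A * P) - (A * P) * Matrix.diagonal dr
      = Matrix.replicateCol Unit α * Matrix.replicateRow Unit (a ᵥ* P) := by
  calc Matrix.diagonal dl * (A * P) - (A * P) * Matrix.diagonal dr
      = Matrix.diagonal dl * A * P - A * (P * Matrix.diagonal dr) := by
        rw [Matrix.mul_assoc, Matrix.mul_assoc]
    _ = Matrix.diagonal dl * A * P - A * Matrix.diagonal dr * P := by
        rw [hP, ← Matrix.mul_assoc]
    _ = (Matrix.diagonal dl * A - A * Matrix.diagonal dr) * P := by
        rw [Matrix.sub_mul]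
    _ = Matrix.replicateCol Unit α * Matrix.replicateRow Unit a * P := by
        rw [hA, Matrix.vecMulVec_eq Unit]
    _ = Matrix.replicateCol Unit α * Matrix.replicateRow Unit (a ᵥ* P) := by
        rw [Matrix.mul_assoc, Matrix.replicateRow_vecMul]

lemma syl_zeta {n : ℕ} (L R M C : Matrix (Fin n) (Fin n) ℂ) (ζ : ℂ)
    (h : L * M - M * R = C) :
    (L - ζ • 1) * M = M * (R - ζ • 1) + C := by
  rw [← h]
  simp only [Matrix.sub_mul, Matrix.mul_sub, Matrix.smul_mul, Matrix.mul_smul,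
    Matrix.one_mul, Matrix.mul_one]
  abel

lemma comm_inv {n : ℕ} (Δ Rz iRz : Matrix (Fin n) (Fin n) ℂ)
    (h : Δ * Rz = Rz * Δ) (h1 : Rz * iRz = 1) (h2 : iRz * Rz = 1) :
    Δ * iRz = iRz * Δ := by
  calc Δ * iRz = (iRz * Rz) * (Δ * iRz) := by rw [h2, Matrix.one_mul]
    _ = iRz * ((Rz * Δ) * iRz) := by
        rw [Matrix.mul_assoc, ← Matrix.mul_assoc Rz Δ iRz]
    _ = iRz * ((Δ * Rz) * iRz) := by rw [h]
    _ = iRz * (Δ * (Rz * iRz)) := by rw [Matrix.mul_assoc Δ]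
    _ = iRz * Δ := by rw [h1, Matrix.mul_one]

lemma diag_comm {n : ℕ} (f g : Fin n → ℂ) :
    Matrix.diagonal f * Matrix.diagonal g = Matrix.diagonal g * Matrix.diagonal f := by
  rw [Matrix.diagonal_mul_diagonal, Matrix.diagonal_mul_diagonal]
  exact congrArg _ (funext fun i => mul_comm _ _)


lemma row_neg' {n : ℕ} (v : Fin n → ℂ) :
    Matrix.replicateRow Unit (-v) = -Matrix.replicateRow Unit v := by
  ext i j; simp

lemma strip_det {n : ℕ} (P iP : Matrix (Fin n) (Fin n) ℂ) (hP : P * iP = 1)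
    (M : Matrix (Fin n) (Fin n) ℂ) : (P * (M * iP)).det = M.det := by
  have h1 : P.det * iP.det = 1 := by rw [← Matrix.det_mul, hP, Matrix.det_one]
  rw [Matrix.det_mul, Matrix.det_mul]
  linear_combination M.det * h1

lemma detA {n : ℕ} (Rz Lz iLz AX BX GX : Matrix (Fin n) (Fin n) ℂ) (α aX : Fin n → ℂ)
    (hLz : Lz * iLz = 1) (hLz' : iLz * Lz = 1)
    (hGX : (1 + AX * BX) * GX = 1)
    (hsyl : AX * Rz = Lz * AX - Matrix.replicateCol Unit α * Matrix.replicateRow Unit aX) :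
    (1 + (AX * Rz) * (BX * iLz)).det
      = (1 + AX * BX).det * (1 - (aX ᵥ* (BX * (GX * iLz))) ⬝ᵥ α) := by
  have hLzZ : ∀ (Z : Matrix (Fin n) (Fin n) ℂ), Lz * (iLz * Z) = Z := by
    intro Z; rw [← Matrix.mul_assoc, hLz, Matrix.one_mul]
  have step1 : 1 + (AX * Rz) * (BX * iLz)
      = Lz * ((((1 : Matrix (Fin n) (Fin n) ℂ) + AX * BX)
          - iLz * (Matrix.replicateCol Unit α * (Matrix.replicateRow Unit aX * BX))) * iLz) := by
    rw [hsyl]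
    simp only [Matrix.sub_mul, Matrix.mul_sub, Matrix.add_mul, Matrix.mul_add,
      Matrix.one_mul, Matrix.mul_one, Matrix.mul_assoc, hLz, hLzZ]
    abel
  rw [step1, strip_det Lz iLz hLz]
  have step2 : ((1 : Matrix (Fin n) (Fin n) ℂ) + AX * BX)
        - iLz * (Matrix.replicateCol Unit α * (Matrix.replicateRow Unit aX * BX))
      = (1 + AX * BX) * (1 - GX * (iLz * (Matrix.replicateCol Unit α * (Matrix.replicateRow Unit aX * BX)))) := by
    rw [Matrix.mul_sub, Matrix.mul_one, ← Matrix.mul_assoc (1 + AX * BX) GX _, hGX,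
      Matrix.one_mul]
  rw [step2, Matrix.det_mul]
  congr 1
  have step3 : (1 : Matrix (Fin n) (Fin n) ℂ)
        - GX * (iLz * (Matrix.replicateCol Unit α * (Matrix.replicateRow Unit aX * BX)))
      = 1 + Matrix.replicateCol Unit ((GX * iLz) *ᵥ α) * Matrix.replicateRow Unit (-(aX ᵥ* BX)) := by
    rw [Matrix.replicateCol_mulVec, row_neg', ← Matrix.replicateRow_vecMul, Matrix.mul_neg, ← sub_eq_add_neg]
    congr 1
    simp only [Matrix.mul_assoc]
  rw [step3, Matrix.det_one_add_replicateCol_mul_replicateRow, neg_dotProduct, ← sub_eq_add_neg,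
    Matrix.dotProduct_mulVec, Matrix.vecMul_vecMul]

lemma detB {n : ℕ} (Rz iRz Lz iLz AY BY GY : Matrix (Fin n) (Fin n) ℂ) (α aY : Fin n → ℂ)
    (hRz : Rz * iRz = 1) (hLz : Lz * iLz = 1) (hLz' : iLz * Lz = 1)
    (hGY : (1 + AY * BY) * GY = 1)
    (hsyl : Lz * AY = AY * Rz + Matrix.replicateCol Unit α * Matrix.replicateRow Unit aY) :
    (1 + (AY * iRz) * (BY * Lz)).det
      = (1 + AY * BY).det * (1 + (aY ᵥ* ((iRz * BY) * GY)) ⬝ᵥ α) := by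
  have hAYi : AY * iRz = iLz * AY + iLz * (Matrix.replicateCol Unit α * (Matrix.replicateRow Unit aY * iRz)) := by
    have h := congrArg (fun M => iLz * (M * iRz)) hsyl
    rw [Matrix.mul_assoc Lz AY iRz] at h
    rw [← Matrix.mul_assoc iLz Lz (AY * iRz), hLz', Matrix.one_mul] at h
    rw [Matrix.add_mul, Matrix.mul_add, Matrix.mul_assoc AY Rz iRz, hRz, Matrix.mul_one] at h
    rw [h]
    simp only [Matrix.mul_assoc]
  have step1 : 1 + (AY * iRz) * (BY * Lz)
      = iLz * ((((1 : Matrix (Fin n) (Fin n) ℂ) + AY * BY)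
          + Matrix.replicateCol Unit α * (Matrix.replicateRow Unit aY * (iRz * BY))) * Lz) := by
    rw [hAYi]
    simp only [Matrix.add_mul, Matrix.mul_add, Matrix.one_mul, Matrix.mul_one,
      Matrix.mul_assoc, hLz']
    abel
  rw [step1, strip_det iLz Lz hLz']
  have step2 : (((1 : Matrix (Fin n) (Fin n) ℂ) + AY * BY)
        + Matrix.replicateCol Unit α * (Matrix.replicateRow Unit aY * (iRz * BY)))
      = (1 + AY * BY) * (1 + GY * (Matrix.replicateCol Unit α * (Matrix.replicateRow Unit aY * (iRz * BY)))) := by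
    rw [Matrix.mul_add, Matrix.mul_one, ← Matrix.mul_assoc (1 + AY * BY) GY _, hGY,
      Matrix.one_mul]
  rw [step2, Matrix.det_mul]
  congr 1
  have step3 : (1 : Matrix (Fin n) (Fin n) ℂ)
        + GY * (Matrix.replicateCol Unit α * (Matrix.replicateRow Unit aY * (iRz * BY)))
      = 1 + Matrix.replicateCol Unit (GY *ᵥ α) * Matrix.replicateRow Unit (aY ᵥ* (iRz * BY)) := by
    rw [Matrix.replicateCol_mulVec, ← Matrix.replicateRow_vecMul]
    congr 1
    simp only [Matrix.mul_assoc]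
  rw [step3, Matrix.det_one_add_replicateCol_mul_replicateRow, Matrix.dotProduct_mulVec, Matrix.vecMul_vecMul]

lemma core {n : ℕ}
    (Rz Lz iRz iLz AX BX AY BY Δ FX GY : Matrix (Fin n) (Fin n) ℂ)
    (raX raY rbX : Matrix Unit (Fin n) ℂ) (cα cβ : Matrix (Fin n) Unit ℂ)
    (hRz : iRz * Rz = 1) (hRz' : Rz * iRz = 1)
    (hLz : Lz * iLz = 1) (hLz' : iLz * Lz = 1)
    (hFX' : FX * (1 + BX * AX) = 1)
    (hGY : (1 + AY * BY) * GY = 1)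
    (e1 : Rz * BX = BX * Lz + cβ * rbX)
    (e2X : Lz * AX = AX * Rz + cα * raX)
    (e2Y : Lz * AY = AY * Rz + cα * raY)
    (hAD : AX * Δ = AY) (haD : raX * Δ = raY) (hΔ : Δ * iRz = iRz * Δ) :
    (1 - raX * (FX * (BX * iLz)) * cα) * (1 + raY * ((iRz * BY) * GY) * cα)
      = 1 + raX * (FX * ((Δ * (iRz * BY) - BX * iLz) * GY)) * cα := by
  -- shape-polymorphic rewriting facts
  have fact1 : ∀ {κ : Type} [Fintype κ] (Z : Matrix (Fin n) κ ℂ),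
      BX * (iLz * Z) = iRz * (BX * Z) + iRz * (cβ * (rbX * (iLz * Z))) := by
    intro κ _ Z
    calc BX * (iLz * Z) = iRz * (Rz * (BX * (iLz * Z))) := by
          rw [← Matrix.mul_assoc iRz, hRz, Matrix.one_mul]
      _ = iRz * ((Rz * BX) * (iLz * Z)) := by rw [Matrix.mul_assoc]
      _ = iRz * ((BX * Lz + cβ * rbX) * (iLz * Z)) := by rw [e1]
      _ = iRz * (BX * (Lz * (iLz * Z)) + cβ * (rbX * (iLz * Z))) := by
          rw [Matrix.add_mul, Matrix.mul_assoc, Matrix.mul_assoc]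
      _ = iRz * (BX * Z) + iRz * (cβ * (rbX * (iLz * Z))) := by
          rw [← Matrix.mul_assoc Lz, hLz, Matrix.one_mul, Matrix.mul_add]
  have fact2 : ∀ {κ : Type} [Fintype κ] (Z : Matrix (Fin n) κ ℂ),
      AY * (iRz * Z) = iLz * (AY * Z) + iLz * (cα * (raY * (iRz * Z))) := by
    intro κ _ Z
    calc AY * (iRz * Z) = iLz * (Lz * (AY * (iRz * Z))) := by
          rw [← Matrix.mul_assoc iLz, hLz', Matrix.one_mul]
      _ = iLz * ((Lz * AY) * (iRz * Z)) := by rw [Matrix.mul_assoc]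
      _ = iLz * ((AY * Rz + cα * raY) * (iRz * Z)) := by rw [e2Y]
      _ = iLz * (AY * (Rz * (iRz * Z)) + cα * (raY * (iRz * Z))) := by
          rw [Matrix.add_mul, Matrix.mul_assoc, Matrix.mul_assoc]
      _ = iLz * (AY * Z) + iLz * (cα * (raY * (iRz * Z))) := by
          rw [← Matrix.mul_assoc Rz, hRz', Matrix.one_mul, Matrix.mul_add]
  -- commutator fact
  have comm : Rz * (BX * AX) = BX * AX * Rz + BX * (cα * raX) + cβ * (rbX * AX) := by
    calc Rz * (BX * AX) = (Rz * BX) * AX := by rw [Matrix.mul_assoc]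
      _ = (BX * Lz + cβ * rbX) * AX := by rw [e1]
      _ = BX * (Lz * AX) + cβ * (rbX * AX) := by
          rw [Matrix.add_mul, Matrix.mul_assoc, Matrix.mul_assoc]
      _ = BX * (AX * Rz + cα * raX) + cβ * (rbX * AX) := by rw [e2X]
      _ = BX * AX * Rz + BX * (cα * raX) + cβ * (rbX * AX) := by
          rw [Matrix.mul_add, ← Matrix.mul_assoc]
  have mat3 : iRz * (BX * AX) = BX * AX * iRz
      - iRz * ((BX * (cα * raX)) * iRz) - iRz * ((cβ * (rbX * AX)) * iRz) := by
    have h := congrArg (fun M => iRz * (M * iRz)) comm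
    simp only [Matrix.add_mul, Matrix.mul_add] at h
    rw [Matrix.mul_assoc Rz, Matrix.mul_assoc (BX*AX), hRz'] at h
    rw [← Matrix.mul_assoc iRz Rz, hRz, Matrix.one_mul, Matrix.mul_one] at h
    rw [h]
    abel
  have fact3 : ∀ {κ : Type} [Fintype κ] (Z : Matrix (Fin n) κ ℂ),
      iRz * ((1 + BX * AX) * Z) = (1 + BX * AX) * (iRz * Z)
        - iRz * (BX * (cα * (raX * (iRz * Z)))) - iRz * (cβ * (rbX * (AX * (iRz * Z)))) := by
    intro κ _ Z
    have h := congrArg (fun M => (iRz * M) * Z) mat3.symm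
    calc iRz * ((1 + BX * AX) * Z)
        = iRz * Z + (iRz * (BX * AX)) * Z := by
          rw [Matrix.add_mul, Matrix.one_mul, Matrix.mul_add, ← Matrix.mul_assoc]
      _ = iRz * Z + ((BX * AX) * iRz
            - iRz * ((BX * (cα * raX)) * iRz) - iRz * ((cβ * (rbX * AX)) * iRz)) * Z := by
          rw [mat3]
      _ = (1 + BX * AX) * (iRz * Z)
            - iRz * (BX * (cα * (raX * (iRz * Z)))) - iRz * (cβ * (rbX * (AX * (iRz * Z)))) := by
          simp only [Matrix.sub_mul, Matrix.add_mul, Matrix.one_mul, Matrix.mul_assoc]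
          abel

  -- abbreviating rewrite helpers
  have hΔZ : ∀ {κ : Type} [Fintype κ] (Z : Matrix (Fin n) κ ℂ),
      Δ * (iRz * Z) = iRz * (Δ * Z) := by
    intro κ _ Z; rw [← Matrix.mul_assoc, hΔ, Matrix.mul_assoc]
  have haDZ : ∀ {κ : Type} [Fintype κ] (Z : Matrix (Fin n) κ ℂ),
      raX * (Δ * Z) = raY * Z := by
    intro κ _ Z; rw [← Matrix.mul_assoc, haD]
  have hFXc : ∀ {κ : Type} [Fintype κ] (Z : Matrix (Fin n) κ ℂ),
      FX * ((1 + BX * AX) * Z) = Z := by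
    intro κ _ Z; rw [← Matrix.mul_assoc, hFX', Matrix.one_mul]
  -- main chains
  have hsplit : cα = GY * cα + AY * (BY * (GY * cα)) := by
    have h : ((1 + AY * BY) * GY) * cα = cα := by rw [hGY, Matrix.one_mul]
    calc cα = ((1 + AY * BY) * GY) * cα := h.symm
      _ = GY * cα + AY * (BY * (GY * cα)) := by
          simp only [Matrix.add_mul, Matrix.one_mul, Matrix.mul_assoc]
  have hU2 : raX * (FX * (BX * (iLz * cα)))
      = raX * (FX * (BX * (iLz * (GY * cα))))
        + raX * (FX * (BX * (iLz * (AY * (BY * (GY * cα)))))) := by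
    conv_lhs => rw [hsplit]
    simp only [Matrix.mul_add]
  have hTb : raX * (FX * (BX * (iLz * (AY * (BY * (GY * cα))))))
      = raX * (FX * (iRz * (BX * (AX * (Δ * (BY * (GY * cα)))))))
        + raX * (FX * (iRz * (cβ * (rbX * (iLz * (AY * (BY * (GY * cα)))))))) := by
    rw [fact1 (AY * (BY * (GY * cα)))]
    have hswap : AY * (BY * (GY * cα)) = AX * (Δ * (BY * (GY * cα))) := by
      rw [← hAD, Matrix.mul_assoc]
    nth_rewrite 1 [hswap]
    simp only [Matrix.mul_add]
  have hMcZ : raX * (iRz * (Δ * (BY * (GY * cα)))) = raY * (iRz * (BY * (GY * cα))) := by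
    rw [← hΔZ, haDZ]
  have hAYZ : AX * (iRz * (Δ * (BY * (GY * cα)))) = AY * (iRz * (BY * (GY * cα))) := by
    rw [← hΔZ, ← Matrix.mul_assoc, hAD]
  have hTa : raX * (FX * (Δ * (iRz * (BY * (GY * cα)))))
        + raX * (FX * (iRz * (BX * (AX * (Δ * (BY * (GY * cα)))))))
      = raY * (iRz * (BY * (GY * cα)))
        - raX * (FX * (iRz * (BX * (cα * (raY * (iRz * (BY * (GY * cα))))))))
        - raX * (FX * (iRz * (cβ * (rbX * (AY * (iRz * (BY * (GY * cα)))))))) := by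
    rw [hΔZ]
    have collect : iRz * ((1 + BX * AX) * (Δ * (BY * (GY * cα))))
        = iRz * (Δ * (BY * (GY * cα))) + iRz * (BX * (AX * (Δ * (BY * (GY * cα))))) := by
      rw [Matrix.add_mul, Matrix.one_mul, Matrix.mul_add, Matrix.mul_assoc]
    rw [← Matrix.mul_add raX, ← Matrix.mul_add FX, ← collect, fact3]
    simp only [Matrix.mul_sub]
    rw [hFXc]
    rw [hMcZ, hAYZ]
  have hS3 : raX * (FX * (iRz * (cβ * (rbX * (AY * (iRz * (BY * (GY * cα))))))))
      = raX * (FX * (iRz * (cβ * (rbX * (iLz * (AY * (BY * (GY * cα))))))))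
        + raX * (FX * (iRz * (cβ * (rbX * (iLz * (cα * (raY * (iRz * (BY * (GY * cα)))))))))) := by
    rw [fact2 (BY * (GY * cα))]
    simp only [Matrix.mul_add]
  have hC2E : raX * (FX * (BX * (iLz * (cα * (raY * (iRz * (BY * (GY * cα))))))))
      = raX * (FX * (iRz * (BX * (cα * (raY * (iRz * (BY * (GY * cα))))))))
        + raX * (FX * (iRz * (cβ * (rbX * (iLz * (cα * (raY * (iRz * (BY * (GY * cα)))))))))) := by
    rw [fact1 (cα * (raY * (iRz * (BY * (GY * cα)))))]
    simp only [Matrix.mul_add]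
  -- assemble
  have expand : (1 - raX * (FX * (BX * iLz)) * cα) * (1 + raY * ((iRz * BY) * GY) * cα)
      = 1 + raY * ((iRz * BY) * GY) * cα - raX * (FX * (BX * iLz)) * cα
        - (raX * (FX * (BX * iLz)) * cα) * (raY * ((iRz * BY) * GY) * cα) := by
    noncomm_ring
  rw [expand]
  have hU : raX * (FX * (BX * iLz)) * cα = raX * (FX * (BX * (iLz * cα))) := by
    simp only [Matrix.mul_assoc]
  have hM : raY * ((iRz * BY) * GY) * cα = raY * (iRz * (BY * (GY * cα))) := by
    simp only [Matrix.mul_assoc]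
  have hUM : (raX * (FX * (BX * (iLz * cα)))) * (raY * (iRz * (BY * (GY * cα))))
      = raX * (FX * (BX * (iLz * (cα * (raY * (iRz * (BY * (GY * cα)))))))) := by
    simp only [Matrix.mul_assoc]
  have hW : raX * (FX * ((Δ * (iRz * BY) - BX * iLz) * GY)) * cα
      = raX * (FX * (Δ * (iRz * (BY * (GY * cα)))))
        - raX * (FX * (BX * (iLz * (GY * cα)))) := by
    simp only [Matrix.sub_mul, Matrix.mul_sub, Matrix.mul_assoc]
  rw [hU, hM, hUM, hW, hU2, hTb, hC2E]
  have hTa2 : raX * (FX * (Δ * (iRz * (BY * (GY * cα)))))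
      = raY * (iRz * (BY * (GY * cα)))
        - raX * (FX * (iRz * (BX * (cα * (raY * (iRz * (BY * (GY * cα))))))))
        - raX * (FX * (iRz * (cβ * (rbX * (AY * (iRz * (BY * (GY * cα))))))))
        - raX * (FX * (iRz * (BX * (AX * (Δ * (BY * (GY * cα))))))) := by
    rw [← hTa]; abel
  rw [hTa2, hS3]
  abel


lemma e11 (P Q : Matrix Unit Unit ℂ) : (P * Q) () () = P () () * Q () () := by
  simp [Matrix.mul_apply]

lemma chain {n : ℕ} (x y : Fin n → ℂ) (M : Matrix (Fin n) (Fin n) ℂ) (i j : Unit) :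
    (Matrix.replicateRow Unit x * M * Matrix.replicateCol Unit y) i j = (x ᵥ* M) ⬝ᵥ y := by
  rw [← Matrix.replicateRow_vecMul, Matrix.replicateRow_mul_replicateCol_apply]

/-- `(τ[Xζ̄]·τ[Yζ])/(τ[X]·τ[Y]) = 1 + ⟨a[X]|F[X]·K·G[Y]|α⟩` with
`K = Δ(R,X,Y)(R−ζ)⁻¹B[Y] − B[X](L−ζ)⁻¹` and `Δ(R,X,Y) = ∏_{ξ∈X}(R−ξ)·∏_{η∈Y}(R−η)⁻¹`. -/
theorem statement4 {n : ℕ} (hn : 1 ≤ n) (l r : Fin n → ℂ)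
    (hlr : ∀ j k, l j ≠ r k) (α β a b : Fin n → ℂ)
    (A B : Matrix (Fin n) (Fin n) ℂ)
    (hA : Matrix.diagonal l * A - A * Matrix.diagonal r = Matrix.vecMulVec α a)
    (hB : Matrix.diagonal r * B - B * Matrix.diagonal l = Matrix.vecMulVec β b)
    (X Y : Multiset ℂ) (ζ : ℂ)
    (hX : ∀ ξ ∈ X, Adm l r ξ) (hY : ∀ ξ ∈ Y, Adm l r ξ) (hζ : Adm l r ζ)
    (hiX : IsUnit (1 + shA r A X * shB l B X))
    (hiY : IsUnit (1 + shA r A Y * shB l B Y))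
    (hiXz : IsUnit (1 + (shA r A X * (Matrix.diagonal r - ζ • 1)) *
        (shB l B X * (Matrix.diagonal l - ζ • 1)⁻¹)))
    (hiYz : IsUnit (1 + shA r A (ζ ::ₘ Y) * shB l B (ζ ::ₘ Y))) :
    (1 + (shA r A X * (Matrix.diagonal r - ζ • 1)) *
          (shB l B X * (Matrix.diagonal l - ζ • 1)⁻¹)).det *
        shtau l r A B (ζ ::ₘ Y) / (shtau l r A B X * shtau l r A B Y)
      = 1 + Matrix.vecMul (Matrix.vecMul a (sProd r X)⁻¹)
          ((1 + shB l B X * shA r A X)⁻¹ *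
            (sProd r X * (sProd r Y)⁻¹ * (Matrix.diagonal r - ζ • 1)⁻¹ * shB l B Y
              - shB l B X * (Matrix.diagonal l - ζ • 1)⁻¹) *
            (1 + shA r A Y * shB l B Y)⁻¹) ⬝ᵥ α := by
  classical
  simp only [shtau, shA, shB] at hiX hiY hiYz ⊢
  set Rz : Matrix (Fin n) (Fin n) ℂ := Matrix.diagonal r - ζ • 1 with hRzdef
  set Lz : Matrix (Fin n) (Fin n) ℂ := Matrix.diagonal l - ζ • 1 with hLzdef
  set PX := sProd r X with hPXdef
  set PY := sProd r Y with hPYdef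
  set QX := sProd l X with hQXdef
  set QY := sProd l Y with hQYdef
  set AX := A * PX⁻¹ with hAXdef
  set BX := B * QX with hBXdef
  set AY := A * PY⁻¹ with hAYdef
  set BY := B * QY with hBYdef
  set FX := (1 + BX * AX)⁻¹ with hFXdef
  set GY := (1 + AY * BY)⁻¹ with hGYdef
  set GX := (1 + AX * BX)⁻¹ with hGXdef
  set aX := a ᵥ* PX⁻¹ with haXdef
  set aY := a ᵥ* PY⁻¹ with haYdef
  set bX := b ᵥ* QX with hbXdef
  -- invertibility facts
  have hRzU : IsUnit Rz.det := (Matrix.isUnit_iff_isUnit_det _).mp hζ.1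
  have hLzU : IsUnit Lz.det := (Matrix.isUnit_iff_isUnit_det _).mp hζ.2
  have hRz1 : Rz * Rz⁻¹ = 1 := Matrix.mul_nonsing_inv _ hRzU
  have hRz2 : Rz⁻¹ * Rz = 1 := Matrix.nonsing_inv_mul _ hRzU
  have hLz1 : Lz * Lz⁻¹ = 1 := Matrix.mul_nonsing_inv _ hLzU
  have hLz2 : Lz⁻¹ * Lz = 1 := Matrix.nonsing_inv_mul _ hLzU
  have hPXd : IsUnit PX.det := sProd_det_isUnit fun ξ hξ => (hX ξ hξ).1
  have hPYd : IsUnit PY.det := sProd_det_isUnit fun ξ hξ => (hY ξ hξ).1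
  have hPX1 : PX * PX⁻¹ = 1 := Matrix.mul_nonsing_inv _ hPXd
  have hPX2 : PX⁻¹ * PX = 1 := Matrix.nonsing_inv_mul _ hPXd
  have hPY1 : PY * PY⁻¹ = 1 := Matrix.mul_nonsing_inv _ hPYd
  have hPY2 : PY⁻¹ * PY = 1 := Matrix.nonsing_inv_mul _ hPYd
  -- diagonal commutations
  have hcommQX : QX * Matrix.diagonal l = Matrix.diagonal l * QX := by
    rw [hQXdef]; simp only [sProd]
    exact diag_comm _ _
  have hcommQY : Lz * QY = QY * Lz := by
    rw [hQYdef, hLzdef, diag_sub_smul]; simp only [sProd]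
    exact diag_comm _ _
  have hcommPXr : Matrix.diagonal r * PX = PX * Matrix.diagonal r := by
    rw [hPXdef]; simp only [sProd]
    exact diag_comm _ _
  have hcommPYr : Matrix.diagonal r * PY = PY * Matrix.diagonal r := by
    rw [hPYdef]; simp only [sProd]
    exact diag_comm _ _
  have hcommPXi : PX⁻¹ * Matrix.diagonal r = Matrix.diagonal r * PX⁻¹ :=
    (comm_inv (Matrix.diagonal r) PX PX⁻¹ hcommPXr hPX1 hPX2).symm
  have hcommPYi : PY⁻¹ * Matrix.diagonal r = Matrix.diagonal r * PY⁻¹ :=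
    (comm_inv (Matrix.diagonal r) PY PY⁻¹ hcommPYr hPY1 hPY2).symm
  -- Sylvester equations, shifted
  have hsylAX : Matrix.diagonal l * AX - AX * Matrix.diagonal r
      = Matrix.replicateCol Unit α * Matrix.replicateRow Unit aX :=
    syl_shift l r A PX⁻¹ α a hA hcommPXi
  have hsylAY : Matrix.diagonal l * AY - AY * Matrix.diagonal r
      = Matrix.replicateCol Unit α * Matrix.replicateRow Unit aY :=
    syl_shift l r A PY⁻¹ α a hA hcommPYi
  have hsylBX : Matrix.diagonal r * BX - BX * Matrix.diagonal l
      = Matrix.replicateCol Unit β * Matrix.replicateRow Unit bX :=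
    syl_shift r l B QX β b hB hcommQX
  have e2X : Lz * AX = AX * Rz + Matrix.replicateCol Unit α * Matrix.replicateRow Unit aX :=
    syl_zeta _ _ _ _ ζ hsylAX
  have e2Y : Lz * AY = AY * Rz + Matrix.replicateCol Unit α * Matrix.replicateRow Unit aY :=
    syl_zeta _ _ _ _ ζ hsylAY
  have e1X : Rz * BX = BX * Lz + Matrix.replicateCol Unit β * Matrix.replicateRow Unit bX :=
    syl_zeta _ _ _ _ ζ hsylBX
  -- Delta
  set Δ := PX * PY⁻¹ with hΔdef
  have hAD : AX * Δ = AY := by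
    rw [hAXdef, hAYdef, hΔdef, Matrix.mul_assoc A, ← Matrix.mul_assoc PX⁻¹ PX PY⁻¹,
      hPX2, Matrix.one_mul]
  have haD : Matrix.replicateRow Unit aX * Δ = Matrix.replicateRow Unit aY := by
    rw [haXdef, haYdef, Matrix.replicateRow_vecMul, Matrix.replicateRow_vecMul, Matrix.mul_assoc,
      ← Matrix.mul_assoc PX⁻¹ PX PY⁻¹, hPX2, Matrix.one_mul]
  have hPYi : PY⁻¹ = Matrix.diagonal (Ring.inverse fun i => (Y.map fun ξ => r i - ξ).prod) := by
    rw [hPYdef]; simp only [sProd]; rw [Matrix.inv_diagonal]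
  have hΔRz : Δ * Rz = Rz * Δ := by
    rw [hΔdef, hPYi, hPXdef, hRzdef, diag_sub_smul]; simp only [sProd]
    rw [Matrix.diagonal_mul_diagonal, diag_comm]
  have hΔR : Δ * Rz⁻¹ = Rz⁻¹ * Δ := comm_inv Δ Rz Rz⁻¹ hΔRz hRz1 hRz2
  -- resolvent facts
  have hGX1 : (1 + AX * BX) * GX = 1 :=
    Matrix.mul_nonsing_inv _ ((Matrix.isUnit_iff_isUnit_det _).mp hiX)
  have hGY1 : (1 + AY * BY) * GY = 1 :=
    Matrix.mul_nonsing_inv _ ((Matrix.isUnit_iff_isUnit_det _).mp hiY)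
  have hFXdetU : IsUnit (1 + BX * AX).det := by
    rw [← Matrix.det_one_add_mul_comm AX BX]
    exact (Matrix.isUnit_iff_isUnit_det _).mp hiX
  have hFX' : FX * (1 + BX * AX) = 1 := Matrix.nonsing_inv_mul _ hFXdetU
  have hFB : FX * BX = BX * GX := by
    have h1 : BX * (1 + AX * BX) = (1 + BX * AX) * BX := by noncomm_ring
    calc FX * BX = FX * (BX * ((1 + AX * BX) * GX)) := by rw [hGX1, Matrix.mul_one]
      _ = FX * ((BX * (1 + AX * BX)) * GX) := by
          rw [Matrix.mul_assoc BX (1 + AX * BX) GX]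
      _ = FX * (((1 + BX * AX) * BX) * GX) := by rw [h1]
      _ = (FX * (1 + BX * AX)) * (BX * GX) := by
          rw [Matrix.mul_assoc (1 + BX * AX) BX GX, ← Matrix.mul_assoc]
      _ = BX * GX := by rw [hFX', Matrix.one_mul]
  -- determinant computations
  have hsylAz : AX * Rz = Lz * AX - Matrix.replicateCol Unit α * Matrix.replicateRow Unit aX := by
    rw [e2X]; abel
  have hdetX : (1 + (AX * Rz) * (BX * Lz⁻¹)).det
      = (1 + AX * BX).det * (1 - (aX ᵥ* (BX * (GX * Lz⁻¹))) ⬝ᵥ α) :=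
    detA Rz Lz Lz⁻¹ AX BX GX α aX hLz1 hLz2 hGX1 hsylAz
  have hconsA : A * (sProd r (ζ ::ₘ Y))⁻¹ = AY * Rz⁻¹ := by
    rw [sProd_cons, ← hRzdef, ← hPYdef, Matrix.mul_inv_rev, ← Matrix.mul_assoc, ← hAYdef]
  have hconsB : B * sProd l (ζ ::ₘ Y) = BY * Lz := by
    rw [sProd_cons, ← hLzdef, ← hQYdef, hcommQY, ← Matrix.mul_assoc, ← hBYdef]
  have hdetY : (1 + (AY * Rz⁻¹) * (BY * Lz)).det
      = (1 + AY * BY).det * (1 + (aY ᵥ* ((Rz⁻¹ * BY) * GY)) ⬝ᵥ α) :=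
    detB Rz Rz⁻¹ Lz Lz⁻¹ AY BY GY α aY hRz1 hLz1 hLz2 hGY1 e2Y
  -- core scalar identity
  have hcore := core Rz Lz Rz⁻¹ Lz⁻¹ AX BX AY BY Δ FX GY
    (Matrix.replicateRow Unit aX) (Matrix.replicateRow Unit aY) (Matrix.replicateRow Unit bX)
    (Matrix.replicateCol Unit α) (Matrix.replicateCol Unit β)
    hRz2 hRz1 hLz1 hLz2 hFX' hGY1 e1X e2X e2Y hAD haD hΔR
  have hscal : (1 - (aX ᵥ* (FX * (BX * Lz⁻¹))) ⬝ᵥ α)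
        * (1 + (aY ᵥ* ((Rz⁻¹ * BY) * GY)) ⬝ᵥ α)
      = 1 + (aX ᵥ* (FX * ((Δ * (Rz⁻¹ * BY) - BX * Lz⁻¹) * GY))) ⬝ᵥ α := by
    have h := congrArg (fun M : Matrix Unit Unit ℂ => M () ()) hcore
    rw [e11] at h
    simp only [Matrix.sub_apply, Matrix.add_apply, Matrix.one_apply_eq, chain] at h
    exact h
  have hu : FX * (BX * Lz⁻¹) = BX * (GX * Lz⁻¹) := by
    rw [← Matrix.mul_assoc, hFB, Matrix.mul_assoc]
  rw [hu] at hscal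
  have hww : FX * (Δ * Rz⁻¹ * BY - BX * Lz⁻¹) * GY
      = FX * ((Δ * (Rz⁻¹ * BY) - BX * Lz⁻¹) * GY) := by
    simp only [Matrix.mul_assoc]
  -- final assembly
  rw [hconsA, hconsB, hdetX, hdetY, hww]
  have hτX : (1 + AX * BX).det ≠ 0 := ((Matrix.isUnit_iff_isUnit_det _).mp hiX).ne_zero
  have hτY : (1 + AY * BY).det ≠ 0 := ((Matrix.isUnit_iff_isUnit_det _).mp hiY).ne_zero
  rw [div_eq_iff (mul_ne_zero hτX hτY)]
  linear_combination ((1 + AX * BX).det * (1 + AY * BY).det) * hscal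
end
end

section
/- Under the stated assumptions, for any finite multisets X, Y of admissible parameters and any admissible parameter ζ, the shifted tau-functions satisfy (σ[X ζ] · ρ[Y ζ̄]) / (τ[X] · τ[Y]) = ⟨a[X]| F[X] · K · G[Y] |α⟩, where K = B[Y](L−ζ)⁻¹ − (R−ζ)⁻¹ B[Y]. -/
open Matrix

noncomputable section

section Helpers
open Matrix
variable {n : ℕ}

lemma hvvM (u v : Fin n → ℂ) (M : Matrix (Fin n) (Fin n) ℂ) :
    vecMulVec u v * M = vecMulVec u (vecMul v M) := by
  ext i j
  simp [vecMulVec_apply, Matrix.mul_apply, vecMul, dotProduct, Finset.mul_sum, mul_assoc]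

lemma hMvv (u v : Fin n → ℂ) (M : Matrix (Fin n) (Fin n) ℂ) :
    M * vecMulVec u v = vecMulVec (M.mulVec u) v := by
  ext i j
  simp [vecMulVec_apply, Matrix.mul_apply, mulVec, dotProduct, Finset.sum_mul, mul_assoc]

lemma hvvvv (u v u' v' : Fin n → ℂ) :
    vecMulVec u v * vecMulVec u' v' = (v ⬝ᵥ u') • vecMulVec u v' := by
  ext i j
  simp [vecMulVec_apply, Matrix.mul_apply, dotProduct, Finset.sum_mul, Finset.mul_sum]
  ring_nf
  exact Finset.sum_congr rfl fun k _ => by ring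

lemma hrowvv (x u v : Fin n → ℂ) :
    vecMul x (vecMulVec u v) = (x ⬝ᵥ u) • v := by
  ext j
  simp [vecMul, vecMulVec_apply, dotProduct, Finset.sum_mul, mul_assoc]

lemma hdetvv (u v : Fin n → ℂ) :
    (1 + vecMulVec u v).det = 1 + v ⬝ᵥ u := by
  rw [vecMulVec_eq (Fin 1), det_one_add_replicateCol_mul_replicateRow]

lemma hdetvv' (u v : Fin n → ℂ) :
    (1 - vecMulVec u v).det = 1 - v ⬝ᵥ u := by
  have h : (1 : Matrix (Fin n) (Fin n) ℂ) - vecMulVec u v = 1 + vecMulVec (-u) v := by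
    ext i j; simp [vecMulVec_apply]; ring
  rw [h, hdetvv]
  have : v ⬝ᵥ (-u) = -(v ⬝ᵥ u) := by
    simp [dotProduct]
  rw [this]; ring

lemma hvecMul_smul (x : Fin n → ℂ) (s : ℂ) (M : Matrix (Fin n) (Fin n) ℂ) :
    vecMul x (s • M) = s • vecMul x M := by
  ext j
  simp [vecMul, dotProduct, Finset.mul_sum]
  exact Finset.sum_congr rfl fun k _ => by ring

lemma hsubdiag (f : Fin n → ℂ) (ζ : ℂ) :
    diagonal f - ζ • (1 : Matrix (Fin n) (Fin n) ℂ) = diagonal (fun i => f i - ζ) := by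
  ext i j
  by_cases h : i = j <;> simp [h, Matrix.one_apply, diagonal_apply]

/-- σ-side core identity. -/
lemma sigma_core (P Pi L A' B' T F : Matrix (Fin n) (Fin n) ℂ)
    (a' β b' : Fin n → ℂ)
    (h1 : P * Pi = 1) (h2 : Pi * P = 1)
    (hTF : T * F = 1) (hFT : F * T = 1)
    (hTdef : T = 1 + B' * A')
    (hS : P * B' - B' * L = vecMulVec β b')
    (hM : IsUnit (1 + (A' * Pi) * (B' * L))) :
    (1 + (A' * Pi) * (B' * L)).det *
      (vecMul (vecMul a' Pi) (1 + (B' * L) * (A' * Pi))⁻¹ ⬝ᵥ β)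
      = T.det * (vecMul a' (F * Pi) ⬝ᵥ β) := by
  have h1' : ∀ Z : Matrix (Fin n) (Fin n) ℂ, P * (Pi * Z) = Z := fun Z => by
    rw [← Matrix.mul_assoc, h1, Matrix.one_mul]
  have h2' : ∀ Z : Matrix (Fin n) (Fin n) ℂ, Pi * (P * Z) = Z := fun Z => by
    rw [← Matrix.mul_assoc, h2, Matrix.one_mul]
  have hTF' : ∀ Z : Matrix (Fin n) (Fin n) ℂ, T * (F * Z) = Z := fun Z => by
    rw [← Matrix.mul_assoc, hTF, Matrix.one_mul]
  have hFT' : ∀ Z : Matrix (Fin n) (Fin n) ℂ, F * (T * Z) = Z := fun Z => by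
    rw [← Matrix.mul_assoc, hFT, Matrix.one_mul]
  set u₀ : Fin n → ℂ := (F * Pi).mulVec β with hu₀
  set w₀ : Fin n → ℂ := vecMul b' A' with hw₀
  set c : ℂ := w₀ ⬝ᵥ u₀ with hc
  set V := vecMulVec u₀ w₀ with hV
  have hVV : V * V = c • V := by rw [hV, hvvvv, hc]
  have hBL : B' * L = P * B' - vecMulVec β b' := by rw [← hS]; abel
  have eTV : T * V = vecMulVec (Pi.mulVec β) w₀ := by
    rw [hV, hMvv]
    congr 1
    rw [hu₀, mulVec_mulVec, ← Matrix.mul_assoc, hTF, Matrix.one_mul]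
  have hMfact : 1 + (B' * L) * (A' * Pi) = P * (T * (1 - V)) * Pi := by
    rw [Matrix.mul_sub, Matrix.mul_one, eTV, hBL, hTdef]
    simp only [Matrix.mul_add, Matrix.add_mul, Matrix.mul_sub, Matrix.sub_mul,
      Matrix.mul_one, Matrix.one_mul, Matrix.mul_assoc, hvvM, hMvv, mulVec_mulVec,
      vecMul_vecMul, one_mulVec, h1, h2, h1', h2', hw₀]
    abel
  have hdet1 : P.det * Pi.det = 1 := by rw [← det_mul, h1, det_one]
  have hdetM : (1 + (B' * L) * (A' * Pi)).det = T.det * (1 - c) := by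
    rw [hMfact, det_mul, det_mul, det_mul, hdetvv' u₀ w₀, ← hc]
    linear_combination (T.det * (1 - c)) * hdet1
  have hdetM' : (1 + (A' * Pi) * (B' * L)).det = T.det * (1 - c) := by
    rw [det_one_add_mul_comm, hdetM]
  have hc1 : (1 : ℂ) - c ≠ 0 := by
    have hu := (isUnit_iff_isUnit_det _).mp hM
    rw [hdetM', isUnit_iff_ne_zero] at hu
    exact fun h => hu (by rw [h, mul_zero])
  set s : ℂ := (1 - c)⁻¹ with hs
  have hsc : s * (1 - c) = 1 := inv_mul_cancel₀ hc1
  have e2 : (1 - V) * (1 + s • V) = 1 := by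
    have expand : (1 - V) * (1 + s • V) = 1 + (s - 1 - s * c) • V := by
      rw [Matrix.sub_mul, Matrix.mul_add, Matrix.mul_add, Matrix.one_mul, Matrix.one_mul,
        Matrix.mul_smul, hVV, smul_smul, sub_smul, sub_smul, one_smul, Matrix.mul_one]
      abel
    rw [expand]
    have hcoef : s - 1 - s * c = 0 := by linear_combination hsc
    rw [hcoef, zero_smul, add_zero]
  have hMW : (1 + (B' * L) * (A' * Pi)) * (P * ((1 + s • V) * (F * Pi))) = 1 := by
    rw [hMfact]
    simp only [Matrix.mul_assoc, h2']
    rw [← Matrix.mul_assoc (1 - V) (1 + s • V) (F * Pi), e2, Matrix.one_mul, hTF', h1]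
  have Minv : (1 + (B' * L) * (A' * Pi))⁻¹ = P * ((1 + s • V) * (F * Pi)) :=
    inv_eq_right_inv hMW
  rw [Minv, hdetM']
  have hrow : vecMul (vecMul a' Pi) (P * ((1 + s • V) * (F * Pi)))
      = vecMul a' (F * Pi) + (s * (a' ⬝ᵥ u₀)) • vecMul b' (A' * (F * Pi)) := by
    rw [vecMul_vecMul, h2', Matrix.add_mul, Matrix.one_mul,
      Matrix.smul_mul, vecMul_add, hvecMul_smul, hV, hvvM, hrowvv, smul_smul,
      hw₀, vecMul_vecMul]
  rw [hrow, add_dotProduct, smul_dotProduct]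
  have e3 : a' ⬝ᵥ u₀ = vecMul a' (F * Pi) ⬝ᵥ β := by
    rw [hu₀, dotProduct_mulVec]
  have e4 : vecMul b' (A' * (F * Pi)) ⬝ᵥ β = c := by
    rw [hc, hw₀, hu₀, dotProduct_mulVec, vecMul_vecMul]
  rw [e3, e4]
  set u : ℂ := vecMul a' (F * Pi) ⬝ᵥ β
  simp only [smul_eq_mul]
  linear_combination (T.det * u * c) * hsc

/-- ρ-side core identity. -/
lemma rho_core (L Li P A'' B'' S G : Matrix (Fin n) (Fin n) ℂ)
    (α β b'' : Fin n → ℂ)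
    (h1 : L * Li = 1) (h2 : Li * L = 1)
    (hSG : S * G = 1) (hGS : G * S = 1)
    (hSdef : S = 1 + A'' * B'')
    (hS : P * B'' - B'' * L = vecMulVec β b'')
    (hN : IsUnit (1 + (A'' * P) * (B'' * Li))) :
    (1 + (A'' * P) * (B'' * Li)).det *
      (vecMul (vecMul b'' Li) (1 + (A'' * P) * (B'' * Li))⁻¹ ⬝ᵥ α)
      = S.det * (vecMul (vecMul b'' Li) G ⬝ᵥ α) := by
  set w₁ : Fin n → ℂ := vecMul b'' Li with hw₁
  set u₁ : Fin n → ℂ := (G * A'').mulVec β with hu₁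
  set d : ℂ := w₁ ⬝ᵥ u₁ with hd
  set V := vecMulVec u₁ w₁ with hV
  have hVV : V * V = d • V := by rw [hV, hvvvv, hd]
  have hPB : P * B'' = B'' * L + vecMulVec β b'' := by rw [← hS]; abel
  have hSV : S * V = vecMulVec (A''.mulVec β) w₁ := by
    rw [hV, hMvv, hu₁, mulVec_mulVec, ← Matrix.mul_assoc, hSG, Matrix.one_mul]
  have hNfact : 1 + (A'' * P) * (B'' * Li) = S * (1 + V) := by
    rw [Matrix.mul_add, Matrix.mul_one, hSV, hSdef]
    have e : A'' * P * (B'' * Li) = A'' * ((P * B'') * Li) := by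
      rw [Matrix.mul_assoc, Matrix.mul_assoc]
    rw [e, hPB]
    simp only [Matrix.add_mul, Matrix.mul_add, Matrix.mul_assoc, h1, h2,
      Matrix.mul_one, hvvM, hMvv, vecMul_vecMul, hw₁]
    abel
  have hdetN : (1 + (A'' * P) * (B'' * Li)).det = S.det * (1 + d) := by
    rw [hNfact, det_mul, hV, hdetvv, ← hd]
  have hd1 : (1 : ℂ) + d ≠ 0 := by
    have hu := (isUnit_iff_isUnit_det _).mp hN
    rw [hdetN, isUnit_iff_ne_zero] at hu
    exact fun h => hu (by rw [h, mul_zero])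
  set t : ℂ := (1 + d)⁻¹ with ht
  have htd : t * (1 + d) = 1 := inv_mul_cancel₀ hd1
  have e2 : (1 + V) * (1 - t • V) = 1 := by
    have expand : (1 + V) * (1 - t • V) = 1 + (1 - t - t * d) • V := by
      rw [Matrix.add_mul, Matrix.mul_sub, Matrix.mul_sub, Matrix.one_mul, Matrix.one_mul,
        Matrix.mul_smul, hVV, smul_smul, sub_smul, sub_smul, one_smul, Matrix.mul_one]
      abel
    rw [expand]
    have hcoef : 1 - t - t * d = 0 := by linear_combination -htd
    rw [hcoef, zero_smul, add_zero]
  have hNW : (1 + (A'' * P) * (B'' * Li)) * ((1 - t • V) * G) = 1 := by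
    rw [hNfact, Matrix.mul_assoc, ← Matrix.mul_assoc (1 + V) (1 - t • V) G, e2,
      Matrix.one_mul, hSG]
  have Ninv : (1 + (A'' * P) * (B'' * Li))⁻¹ = (1 - t • V) * G :=
    inv_eq_right_inv hNW
  rw [Ninv, hdetN]
  have hneg : (1 : Matrix (Fin n) (Fin n) ℂ) - t • V = 1 + (-t) • V := by
    rw [neg_smul, ← sub_eq_add_neg]
  have hrow : vecMul w₁ ((1 - t • V) * G)
      = vecMul w₁ G + (-t * (w₁ ⬝ᵥ u₁)) • vecMul w₁ G := by
    rw [hneg, Matrix.add_mul, Matrix.one_mul, vecMul_add, Matrix.smul_mul,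
      hvecMul_smul, hV, hvvM, hrowvv, smul_smul]
  rw [hrow, add_dotProduct, smul_dotProduct, ← hd]
  set w : ℂ := vecMul w₁ G ⬝ᵥ α
  simp only [smul_eq_mul]
  linear_combination (-(S.det) * d * w) * htd

end Helpers
/-- `(σ[Xζ]·ρ[Yζ̄])/(τ[X]·τ[Y]) = ⟨a[X]|F[X]·K·G[Y]|α⟩` with
`K = B[Y](L−ζ)⁻¹ − (R−ζ)⁻¹B[Y]`. -/
theorem statement5 {n : ℕ} (hn : 1 ≤ n) (l r : Fin n → ℂ)
    (hlr : ∀ j k, l j ≠ r k) (α β a b : Fin n → ℂ)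
    (A B : Matrix (Fin n) (Fin n) ℂ)
    (hA : Matrix.diagonal l * A - A * Matrix.diagonal r = Matrix.vecMulVec α a)
    (hB : Matrix.diagonal r * B - B * Matrix.diagonal l = Matrix.vecMulVec β b)
    (X Y : Multiset ℂ) (ζ : ℂ)
    (hX : ∀ ξ ∈ X, Adm l r ξ) (hY : ∀ ξ ∈ Y, Adm l r ξ) (hζ : Adm l r ζ)
    (hiX : IsUnit (1 + shA r A X * shB l B X))
    (hiY : IsUnit (1 + shA r A Y * shB l B Y))
    (hiXz : IsUnit (1 + shA r A (ζ ::ₘ X) * shB l B (ζ ::ₘ X)))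
    (hiYz : IsUnit (1 + (shA r A Y * (Matrix.diagonal r - ζ • 1)) *
        (shB l B Y * (Matrix.diagonal l - ζ • 1)⁻¹))) :
    shsigma l r a β A B (ζ ::ₘ X) *
        ((1 + (shA r A Y * (Matrix.diagonal r - ζ • 1)) *
            (shB l B Y * (Matrix.diagonal l - ζ • 1)⁻¹)).det *
          (Matrix.vecMul
              (Matrix.vecMul (Matrix.vecMul b (sProd l Y)) (Matrix.diagonal l - ζ • 1)⁻¹)
              (1 + (shA r A Y * (Matrix.diagonal r - ζ • 1)) *
                (shB l B Y * (Matrix.diagonal l - ζ • 1)⁻¹))⁻¹ ⬝ᵥ α)) /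
        (shtau l r A B X * shtau l r A B Y)
      = Matrix.vecMul (Matrix.vecMul a (sProd r X)⁻¹)
          ((1 + shB l B X * shA r A X)⁻¹ *
            (shB l B Y * (Matrix.diagonal l - ζ • 1)⁻¹
              - (Matrix.diagonal r - ζ • 1)⁻¹ * shB l B Y) *
            (1 + shA r A Y * shB l B Y)⁻¹) ⬝ᵥ α := by
  classical
  have hRzd : IsUnit (Matrix.diagonal r - ζ • (1 : Matrix (Fin n) (Fin n) ℂ)).det :=
    (isUnit_iff_isUnit_det _).mp hζ.1
  have hLzd : IsUnit (Matrix.diagonal l - ζ • (1 : Matrix (Fin n) (Fin n) ℂ)).det :=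
    (isUnit_iff_isUnit_det _).mp hζ.2
  have hRz1 : (Matrix.diagonal r - ζ • (1 : Matrix (Fin n) (Fin n) ℂ)) *
      (Matrix.diagonal r - ζ • 1)⁻¹ = 1 := mul_nonsing_inv _ hRzd
  have hRz2 : (Matrix.diagonal r - ζ • (1 : Matrix (Fin n) (Fin n) ℂ))⁻¹ *
      (Matrix.diagonal r - ζ • 1) = 1 := nonsing_inv_mul _ hRzd
  have hLz1 : (Matrix.diagonal l - ζ • (1 : Matrix (Fin n) (Fin n) ℂ)) *
      (Matrix.diagonal l - ζ • 1)⁻¹ = 1 := mul_nonsing_inv _ hLzd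
  have hLz2 : (Matrix.diagonal l - ζ • (1 : Matrix (Fin n) (Fin n) ℂ))⁻¹ *
      (Matrix.diagonal l - ζ • 1) = 1 := nonsing_inv_mul _ hLzd
  -- cons decompositions of sProd
  have ePz : sProd r (ζ ::ₘ X) = (Matrix.diagonal r - ζ • 1) * sProd r X := by
    rw [hsubdiag]
    unfold sProd
    rw [diagonal_mul_diagonal]
    ext i j
    by_cases h : i = j <;> simp [h, diagonal_apply, Multiset.prod_cons]
  have eQz : sProd l (ζ ::ₘ X) = sProd l X * (Matrix.diagonal l - ζ • 1) := by
    rw [hsubdiag]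
    unfold sProd
    rw [diagonal_mul_diagonal]
    ext i j
    by_cases h : i = j <;> simp [h, diagonal_apply, Multiset.prod_cons, mul_comm]
  have eA : shA r A (ζ ::ₘ X) = shA r A X * (Matrix.diagonal r - ζ • 1)⁻¹ := by
    unfold shA
    rw [ePz, Matrix.mul_inv_rev, ← Matrix.mul_assoc]
  have eB : shB l B (ζ ::ₘ X) = shB l B X * (Matrix.diagonal l - ζ • 1) := by
    unfold shB
    rw [eQz, ← Matrix.mul_assoc]
  have eRow : vecMul a (sProd r (ζ ::ₘ X))⁻¹
      = vecMul (vecMul a (sProd r X)⁻¹) (Matrix.diagonal r - ζ • 1)⁻¹ := by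
    rw [ePz, Matrix.mul_inv_rev, ← vecMul_vecMul]
  -- shifted Sylvester equations for B
  have hsyl : ∀ g : Fin n → ℂ,
      (Matrix.diagonal r - ζ • 1) * (B * Matrix.diagonal g)
        - (B * Matrix.diagonal g) * (Matrix.diagonal l - ζ • 1)
        = vecMulVec β (vecMul b (Matrix.diagonal g)) := by
    intro g
    have hcomm : Matrix.diagonal g * Matrix.diagonal l
        = Matrix.diagonal l * Matrix.diagonal g := by
      rw [diagonal_mul_diagonal, diagonal_mul_diagonal]
      ext i j
      by_cases h : i = j <;> simp [h, diagonal_apply, mul_comm]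
    have key : (Matrix.diagonal r - ζ • 1) * (B * Matrix.diagonal g)
        - (B * Matrix.diagonal g) * (Matrix.diagonal l - ζ • 1)
        = (Matrix.diagonal r * B - B * Matrix.diagonal l) * Matrix.diagonal g := by
      simp only [Matrix.sub_mul, Matrix.mul_sub, Matrix.smul_mul, Matrix.mul_smul,
        Matrix.one_mul, Matrix.mul_one, Matrix.mul_assoc, hcomm]
      abel
    rw [key, hB, hvvM]
  have hSX : (Matrix.diagonal r - ζ • 1) * shB l B X
      - shB l B X * (Matrix.diagonal l - ζ • 1)
      = vecMulVec β (vecMul b (sProd l X)) := by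
    simpa only [shB, sProd] using hsyl fun i => ((X.map fun ξ => l i - ξ)).prod
  have hSY : (Matrix.diagonal r - ζ • 1) * shB l B Y
      - shB l B Y * (Matrix.diagonal l - ζ • 1)
      = vecMulVec β (vecMul b (sProd l Y)) := by
    simpa only [shB, sProd] using hsyl fun i => ((Y.map fun ξ => l i - ξ)).prod
  -- invertibility facts
  have hdXu : IsUnit (1 + shB l B X * shA r A X).det := by
    rw [det_one_add_mul_comm]
    exact (isUnit_iff_isUnit_det _).mp hiX
  have hdYu : IsUnit (1 + shA r A Y * shB l B Y).det := (isUnit_iff_isUnit_det _).mp hiY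
  have hTXmul : (1 + shB l B X * shA r A X) * (1 + shB l B X * shA r A X)⁻¹ = 1 :=
    mul_nonsing_inv _ hdXu
  have hTXinv : (1 + shB l B X * shA r A X)⁻¹ * (1 + shB l B X * shA r A X) = 1 :=
    nonsing_inv_mul _ hdXu
  have hSGmul : (1 + shA r A Y * shB l B Y) * (1 + shA r A Y * shB l B Y)⁻¹ = 1 :=
    mul_nonsing_inv _ hdYu
  have hGSmul : (1 + shA r A Y * shB l B Y)⁻¹ * (1 + shA r A Y * shB l B Y) = 1 :=
    nonsing_inv_mul _ hdYu
  have hMX : IsUnit (1 + (shA r A X * (Matrix.diagonal r - ζ • 1)⁻¹) *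
      (shB l B X * (Matrix.diagonal l - ζ • 1))) := by
    rw [← eA, ← eB]; exact hiXz
  -- σ-side reduction
  have eσcore := sigma_core (Matrix.diagonal r - ζ • 1) (Matrix.diagonal r - ζ • 1)⁻¹
    (Matrix.diagonal l - ζ • 1) (shA r A X) (shB l B X)
    (1 + shB l B X * shA r A X) (1 + shB l B X * shA r A X)⁻¹
    (vecMul a (sProd r X)⁻¹) β (vecMul b (sProd l X))
    hRz1 hRz2 hTXmul hTXinv rfl hSX hMX
  have eσ : shsigma l r a β A B (ζ ::ₘ X)
      = (1 + shB l B X * shA r A X).det *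
        (vecMul (vecMul a (sProd r X)⁻¹)
          ((1 + shB l B X * shA r A X)⁻¹ * (Matrix.diagonal r - ζ • 1)⁻¹) ⬝ᵥ β) := by
    unfold shsigma shtau
    rw [eA, eB, eRow]
    exact eσcore
  -- ρ-side reduction
  have eρ := rho_core (Matrix.diagonal l - ζ • 1) (Matrix.diagonal l - ζ • 1)⁻¹
    (Matrix.diagonal r - ζ • 1) (shA r A Y) (shB l B Y)
    (1 + shA r A Y * shB l B Y) (1 + shA r A Y * shB l B Y)⁻¹
    α β (vecMul b (sProd l Y))
    hLz1 hLz2 hSGmul hGSmul rfl hSY hiYz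
  -- the kernel K is rank one
  have hK : shB l B Y * (Matrix.diagonal l - ζ • 1)⁻¹
      - (Matrix.diagonal r - ζ • 1)⁻¹ * shB l B Y
      = vecMulVec ((Matrix.diagonal r - ζ • 1)⁻¹.mulVec β)
        (vecMul (vecMul b (sProd l Y)) (Matrix.diagonal l - ζ • 1)⁻¹) := by
    have e5 : shB l B Y * (Matrix.diagonal l - ζ • 1)⁻¹
        - (Matrix.diagonal r - ζ • 1)⁻¹ * shB l B Y
        = (Matrix.diagonal r - ζ • 1)⁻¹ *
          ((Matrix.diagonal r - ζ • 1) * shB l B Y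
            - shB l B Y * (Matrix.diagonal l - ζ • 1)) * (Matrix.diagonal l - ζ • 1)⁻¹ := by
      rw [Matrix.mul_sub, Matrix.sub_mul]
      congr 1
      · rw [← Matrix.mul_assoc, hRz2, Matrix.one_mul]
      · rw [Matrix.mul_assoc, Matrix.mul_assoc, hLz1, Matrix.mul_one]
    rw [e5, hSY, hMvv, hvvM]
  -- RHS factorization
  have eRHS : vecMul (vecMul a (sProd r X)⁻¹)
        ((1 + shB l B X * shA r A X)⁻¹ *
          (shB l B Y * (Matrix.diagonal l - ζ • 1)⁻¹
            - (Matrix.diagonal r - ζ • 1)⁻¹ * shB l B Y) *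
          (1 + shA r A Y * shB l B Y)⁻¹) ⬝ᵥ α
      = (vecMul (vecMul a (sProd r X)⁻¹)
            ((1 + shB l B X * shA r A X)⁻¹ * (Matrix.diagonal r - ζ • 1)⁻¹) ⬝ᵥ β) *
        (vecMul (vecMul (vecMul b (sProd l Y)) (Matrix.diagonal l - ζ • 1)⁻¹)
            (1 + shA r A Y * shB l B Y)⁻¹ ⬝ᵥ α) := by
    rw [hK, hMvv, hvvM, hrowvv, smul_dotProduct, mulVec_mulVec, dotProduct_mulVec, smul_eq_mul]
  have hτX : shtau l r A B X = (1 + shB l B X * shA r A X).det := by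
    unfold shtau
    rw [det_one_add_mul_comm]
  have hτY : shtau l r A B Y = (1 + shA r A Y * shB l B Y).det := rfl
  have hτX0 : (1 + shB l B X * shA r A X).det ≠ 0 := hdXu.ne_zero
  have hτY0 : (1 + shA r A Y * shB l B Y).det ≠ 0 := hdYu.ne_zero
  rw [eσ, eρ, hτX, hτY, eRHS, div_eq_iff (mul_ne_zero hτX0 hτY0)]
  ring
end
end

section
/- Under the stated assumptions, for any finite multisets X, Y of admissible parameters and any admissible parameter ζ, the shifted tau-functions satisfy (σ[X ζ] · τ[Y ζ̄]) / (τ[X] · τ[Y]) = ⟨a[X]| F[X] · K · F[Y] |β⟩, where K = (R−ζ)⁻¹ + B[Y](L−ζ)⁻¹ A[Y]. -/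
open Matrix

noncomputable section

namespace St6

variable {n : ℕ}

lemma diag_sub (d : Fin n → ℂ) (ζ : ℂ) :
    Matrix.diagonal d - ζ • (1 : Matrix (Fin n) (Fin n) ℂ)
      = Matrix.diagonal (fun i => d i - ζ) := by
  ext i j
  by_cases h : i = j <;> simp [Matrix.one_apply, Matrix.diagonal_apply, h]

lemma mul_vecMulVec (M : Matrix (Fin n) (Fin n) ℂ) (x y : Fin n → ℂ) :
    M * Matrix.vecMulVec x y = Matrix.vecMulVec (M *ᵥ x) y := by
  ext i j
  simp only [Matrix.mul_apply, Matrix.vecMulVec_apply, Matrix.mulVec, dotProduct,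
    Finset.sum_mul, mul_assoc]

lemma vecMulVec_mul (M : Matrix (Fin n) (Fin n) ℂ) (x y : Fin n → ℂ) :
    Matrix.vecMulVec x y * M = Matrix.vecMulVec x (Matrix.vecMul y M) := by
  ext i j
  simp only [Matrix.mul_apply, Matrix.vecMulVec_apply, Matrix.vecMul, dotProduct,
    Finset.mul_sum, mul_assoc]

lemma vecMulVec_mulVec (x y z : Fin n → ℂ) :
    Matrix.vecMulVec x y *ᵥ z = (y ⬝ᵥ z) • x := by
  ext i
  simp only [Matrix.mulVec, dotProduct, Matrix.vecMulVec_apply, Pi.smul_apply,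
    smul_eq_mul, Finset.mul_sum, Finset.sum_mul, mul_assoc]
  congr 1; funext k; ring

lemma vecMulVec_neg_left (x y : Fin n → ℂ) :
    Matrix.vecMulVec (-x) y = - Matrix.vecMulVec x y := by
  ext i j; simp [Matrix.vecMulVec_apply]

lemma det_one_add_vecMulVec (u v : Fin n → ℂ) :
    (1 + Matrix.vecMulVec u v).det = 1 + v ⬝ᵥ u := by
  rw [Matrix.vecMulVec_eq Unit, Matrix.det_one_add_replicateCol_mul_replicateRow]

/-- determinant lemma: `det (D - x yᵀ) = det D * (1 - y ⬝ N x)` when `D * N = 1`. -/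
lemma det_sub_vecMulVec {D N : Matrix (Fin n) (Fin n) ℂ} (h : D * N = 1)
    (x y : Fin n → ℂ) :
    (D - Matrix.vecMulVec x y).det = D.det * (1 - y ⬝ᵥ (N *ᵥ x)) := by
  have key : D - Matrix.vecMulVec x y = D * (1 + Matrix.vecMulVec (-(N *ᵥ x)) y) := by
    rw [Matrix.mul_add, Matrix.mul_one, mul_vecMulVec, Matrix.mulVec_neg,
      Matrix.mulVec_mulVec, h, Matrix.one_mulVec]
    rw [vecMulVec_neg_left, sub_eq_add_neg]
  rw [key, Matrix.det_mul, det_one_add_vecMulVec, dotProduct_neg, ← sub_eq_add_neg]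

lemma det_add_vecMulVec {E N : Matrix (Fin n) (Fin n) ℂ} (h : E * N = 1)
    (x y : Fin n → ℂ) :
    (E + Matrix.vecMulVec x y).det = E.det * (1 + y ⬝ᵥ (N *ᵥ x)) := by
  have := det_sub_vecMulVec h (-x) y
  rw [vecMulVec_neg_left, sub_neg_eq_add, Matrix.mulVec_neg, dotProduct_neg,
    sub_neg_eq_add] at this
  exact this

lemma mul_inv_comm {M N : Matrix (Fin n) (Fin n) ℂ} (h : M * N = N * M) (hN : IsUnit N) :
    M * N⁻¹ = N⁻¹ * M := by
  have hd : IsUnit N.det := (Matrix.isUnit_iff_isUnit_det N).1 hN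
  have h1 : N * N⁻¹ = 1 := Matrix.mul_nonsing_inv N hd
  have h2 : N⁻¹ * N = 1 := Matrix.nonsing_inv_mul N hd
  calc M * N⁻¹ = N⁻¹ * N * (M * N⁻¹) := by rw [h2, Matrix.one_mul]
    _ = N⁻¹ * (N * M) * N⁻¹ := by rw [Matrix.mul_assoc, Matrix.mul_assoc, Matrix.mul_assoc]
    _ = N⁻¹ * (M * N) * N⁻¹ := by rw [h]
    _ = N⁻¹ * M := by
        rw [Matrix.mul_assoc, Matrix.mul_assoc, h1, Matrix.mul_one]

lemma isUnit_one_add_swap {M N : Matrix (Fin n) (Fin n) ℂ} (h : IsUnit (1 + M * N)) :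
    IsUnit (1 + N * M) := by
  rw [Matrix.isUnit_iff_isUnit_det] at h ⊢
  rwa [Matrix.det_one_add_mul_comm] at h

lemma inv_mul_eq_mul_inv {M N : Matrix (Fin n) (Fin n) ℂ} (h1 : IsUnit (1 + M * N)) :
    (1 + M * N)⁻¹ * M = M * (1 + N * M)⁻¹ := by
  have h2 : IsUnit (1 + N * M) := isUnit_one_add_swap h1
  have hd1 : IsUnit (1 + M * N).det := (Matrix.isUnit_iff_isUnit_det _).1 h1
  have hd2 : IsUnit (1 + N * M).det := (Matrix.isUnit_iff_isUnit_det _).1 h2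
  have e : M * (1 + N * M) = (1 + M * N) * M := by noncomm_ring
  calc (1 + M * N)⁻¹ * M
      = (1 + M * N)⁻¹ * (M * (1 + N * M)) * (1 + N * M)⁻¹ := by
        rw [Matrix.mul_assoc (1 + M * N)⁻¹, Matrix.mul_assoc, Matrix.mul_nonsing_inv _ hd2,
          Matrix.mul_one]
    _ = (1 + M * N)⁻¹ * ((1 + M * N) * M) * (1 + N * M)⁻¹ := by rw [e]
    _ = M * (1 + N * M)⁻¹ := by
        rw [← Matrix.mul_assoc (1 + M * N)⁻¹, Matrix.nonsing_inv_mul _ hd1, Matrix.one_mul]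

lemma diag_mul_comm (f g : Fin n → ℂ) :
    Matrix.diagonal f * Matrix.diagonal g = Matrix.diagonal g * Matrix.diagonal f := by
  rw [Matrix.diagonal_mul_diagonal, Matrix.diagonal_mul_diagonal]
  exact congrArg Matrix.diagonal (funext fun i => mul_comm _ _)

lemma sProd_cons (d : Fin n → ℂ) (ζ : ℂ) (X : Multiset ℂ) :
    sProd d (ζ ::ₘ X) = (Matrix.diagonal d - ζ • 1) * sProd d X := by
  rw [diag_sub]
  unfold sProd
  rw [Matrix.diagonal_mul_diagonal]
  exact congrArg Matrix.diagonal
    (funext fun i => by rw [Multiset.map_cons, Multiset.prod_cons])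

/-- The σ-part computation: if `H = Rz·E·S − β vᵀ` with `Rz·S = S·Rz = 1`, `E`, `H` units,
then `det H · (ρ H⁻¹ ⬝ β) = det E · (ρ (Rz E⁻¹ S) ⬝ β)`. -/
lemma aux_sigma {Rz S E H : Matrix (Fin n) (Fin n) ℂ}
    (hRS : Rz * S = 1) (hSR : S * Rz = 1)
    (hEu : IsUnit E) (hHu : IsUnit H)
    (β v ρ : Fin n → ℂ) (hH : H = Rz * E * S - Matrix.vecMulVec β v) :
    H.det * (Matrix.vecMul ρ H⁻¹ ⬝ᵥ β)
      = E.det * (Matrix.vecMul ρ (Rz * E⁻¹ * S) ⬝ᵥ β) := by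
  have hEd : IsUnit E.det := (Matrix.isUnit_iff_isUnit_det E).1 hEu
  have hHd : IsUnit H.det := (Matrix.isUnit_iff_isUnit_det H).1 hHu
  have hEE : E * E⁻¹ = 1 := Matrix.mul_nonsing_inv E hEd
  have hHH : H⁻¹ * H = 1 := Matrix.nonsing_inv_mul H hHd
  have hDN : (Rz * E * S) * (Rz * E⁻¹ * S) = 1 := by
    calc (Rz * E * S) * (Rz * E⁻¹ * S) = Rz * (E * ((S * Rz) * (E⁻¹ * S))) := by
          simp only [Matrix.mul_assoc]
      _ = Rz * S := by rw [hSR, Matrix.one_mul, ← Matrix.mul_assoc E, hEE, Matrix.one_mul]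
      _ = 1 := hRS
  set N := Rz * E⁻¹ * S with hN
  set c : ℂ := v ⬝ᵥ (N *ᵥ β) with hc
  have hdetD : (Rz * E * S).det = E.det * (Rz * S).det := by
    rw [Matrix.det_mul, Matrix.det_mul, Matrix.det_mul]; ring
  have hdetH : H.det = E.det * (1 - c) := by
    rw [hH, det_sub_vecMulVec hDN, hdetD, hRS, Matrix.det_one, mul_one, hc]
  have hkey : H *ᵥ (N *ᵥ β) = (1 - c) • β := by
    rw [hH, Matrix.sub_mulVec, Matrix.mulVec_mulVec, hDN, Matrix.one_mulVec,
      vecMulVec_mulVec, ← hc, sub_smul, one_smul]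
  have hNβ : N *ᵥ β = (1 - c) • (H⁻¹ *ᵥ β) := by
    calc N *ᵥ β = (H⁻¹ * H) *ᵥ (N *ᵥ β) := by rw [hHH, Matrix.one_mulVec]
      _ = H⁻¹ *ᵥ (H *ᵥ (N *ᵥ β)) := by rw [← Matrix.mulVec_mulVec]
      _ = H⁻¹ *ᵥ ((1 - c) • β) := by rw [hkey]
      _ = (1 - c) • (H⁻¹ *ᵥ β) := by rw [Matrix.mulVec_smul]
  have hrow : Matrix.vecMul ρ N ⬝ᵥ β = (1 - c) * (Matrix.vecMul ρ H⁻¹ ⬝ᵥ β) := by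
    rw [← dotProduct_mulVec, hNβ, dotProduct_smul, smul_eq_mul,
      dotProduct_mulVec]
  rw [hdetH, hrow]; ring

end St6

/-- `(σ[Xζ]·τ[Yζ̄])/(τ[X]·τ[Y]) = ⟨a[X]|F[X]·K·F[Y]|β⟩` with
`K = (R−ζ)⁻¹ + B[Y](L−ζ)⁻¹A[Y]`. -/
theorem statement6 {n : ℕ} (hn : 1 ≤ n) (l r : Fin n → ℂ)
    (hlr : ∀ j k, l j ≠ r k) (α β a b : Fin n → ℂ)
    (A B : Matrix (Fin n) (Fin n) ℂ)
    (hA : Matrix.diagonal l * A - A * Matrix.diagonal r = Matrix.vecMulVec α a)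
    (hB : Matrix.diagonal r * B - B * Matrix.diagonal l = Matrix.vecMulVec β b)
    (X Y : Multiset ℂ) (ζ : ℂ)
    (hX : ∀ ξ ∈ X, Adm l r ξ) (hY : ∀ ξ ∈ Y, Adm l r ξ) (hζ : Adm l r ζ)
    (hiX : IsUnit (1 + shA r A X * shB l B X))
    (hiY : IsUnit (1 + shA r A Y * shB l B Y))
    (hiXz : IsUnit (1 + shA r A (ζ ::ₘ X) * shB l B (ζ ::ₘ X)))
    (hiYz : IsUnit (1 + (shA r A Y * (Matrix.diagonal r - ζ • 1)) *
        (shB l B Y * (Matrix.diagonal l - ζ • 1)⁻¹))) :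
    shsigma l r a β A B (ζ ::ₘ X) *
        (1 + (shA r A Y * (Matrix.diagonal r - ζ • 1)) *
          (shB l B Y * (Matrix.diagonal l - ζ • 1)⁻¹)).det /
        (shtau l r A B X * shtau l r A B Y)
      = Matrix.vecMul (Matrix.vecMul a (sProd r X)⁻¹)
          ((1 + shB l B X * shA r A X)⁻¹ *
            ((Matrix.diagonal r - ζ • 1)⁻¹
              + shB l B Y * (Matrix.diagonal l - ζ • 1)⁻¹ * shA r A Y) *
            (1 + shB l B Y * shA r A Y)⁻¹) ⬝ᵥ β := by
  classical
  obtain ⟨hRu, hLu⟩ := hζ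
  set Rz : Matrix (Fin n) (Fin n) ℂ := Matrix.diagonal r - ζ • 1 with hRzdef
  set Lz : Matrix (Fin n) (Fin n) ℂ := Matrix.diagonal l - ζ • 1 with hLzdef
  have hRd : IsUnit Rz.det := (Matrix.isUnit_iff_isUnit_det _).1 hRu
  have hLd : IsUnit Lz.det := (Matrix.isUnit_iff_isUnit_det _).1 hLu
  set S := Rz⁻¹ with hSdef
  set La := Lz⁻¹ with hLadef
  have hRS : Rz * S = 1 := Matrix.mul_nonsing_inv _ hRd
  have hSR : S * Rz = 1 := Matrix.nonsing_inv_mul _ hRd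
  have hLL : Lz * La = 1 := Matrix.mul_nonsing_inv _ hLd
  -- shifted Sylvester relation for B
  have hRB : Rz * B = B * Lz + Matrix.vecMulVec β b := by
    have h1 : Rz * B - B * Lz = Matrix.vecMulVec β b := by
      rw [hRzdef, hLzdef, Matrix.sub_mul, Matrix.mul_sub, smul_mul_assoc, mul_smul_comm,
        Matrix.one_mul, Matrix.mul_one, ← hB]
      abel
    rw [← h1]; abel
  -- abbreviations
  set P := sProd r X with hPdef
  set Q := sProd l X with hQdef
  set PY := sProd r Y with hPYdef
  set QY := sProd l Y with hQYdef
  set AX := shA r A X with hAXdef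
  set BX := shB l B X with hBXdef
  set AY := shA r A Y with hAYdef
  set BY := shB l B Y with hBYdef
  have hAX : AX = A * P⁻¹ := by rw [hAXdef]; simp only [shA]; rfl
  have hBX : BX = B * Q := by rw [hBXdef]; simp only [shB]; rfl
  have hAY : AY = A * PY⁻¹ := by rw [hAYdef]; simp only [shA]; rfl
  have hBY : BY = B * QY := by rw [hBYdef]; simp only [shB]; rfl
  -- cons products
  have hscr : sProd r (ζ ::ₘ X) = Rz * P := by rw [St6.sProd_cons, hPdef, hRzdef]
  have hscl : sProd l (ζ ::ₘ X) = Lz * Q := by rw [St6.sProd_cons, hQdef, hLzdef]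
  have hAz : shA r A (ζ ::ₘ X) = AX * S := by
    simp only [shA]
    rw [hscr, Matrix.mul_inv_rev, ← Matrix.mul_assoc, ← hAX, ← hSdef]
  have hBz : shB l B (ζ ::ₘ X) = Rz * BX - Matrix.vecMulVec β (Matrix.vecMul b Q) := by
    simp only [shB]
    rw [hscl, ← Matrix.mul_assoc]
    have hBL : B * Lz = Rz * B - Matrix.vecMulVec β b := by rw [hRB]; abel
    rw [hBL, Matrix.sub_mul, St6.vecMulVec_mul, Matrix.mul_assoc, ← hBX]
  -- units
  have hEu : IsUnit (1 + BX * AX) := St6.isUnit_one_add_swap hiX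
  have hHu : IsUnit (1 + shB l B (ζ ::ₘ X) * shA r A (ζ ::ₘ X)) :=
    St6.isUnit_one_add_swap hiXz
  -- step 1 : decomposition of 1 + B[ζX] A[ζX]
  have hHdecomp : 1 + shB l B (ζ ::ₘ X) * shA r A (ζ ::ₘ X)
      = Rz * (1 + BX * AX) * S - Matrix.vecMulVec β
          (Matrix.vecMul (Matrix.vecMul (Matrix.vecMul b Q) AX) S) := by
    rw [hAz, hBz, Matrix.sub_mul, St6.vecMulVec_mul, ← Matrix.vecMul_vecMul]
    have expand : Rz * (1 + BX * AX) * S = 1 + Rz * BX * (AX * S) := by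
      calc Rz * (1 + BX * AX) * S = (Rz + Rz * (BX * AX)) * S := by
            rw [Matrix.mul_add, Matrix.mul_one]
        _ = Rz * S + Rz * (BX * AX) * S := Matrix.add_mul _ _ _
        _ = 1 + Rz * BX * (AX * S) := by rw [hRS]; simp only [Matrix.mul_assoc]
    rw [expand]
    abel
  have hτX : shtau l r A B X = (1 + AX * BX).det := by
    simp only [shtau]; rfl
  have hτY : shtau l r A B Y = (1 + AY * BY).det := by
    simp only [shtau]; rfl
  -- step 1 : sigma formula
  have hσ : shsigma l r a β A B (ζ ::ₘ X)
      = shtau l r A B X *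
        (Matrix.vecMul (Matrix.vecMul a P⁻¹) ((1 + BX * AX)⁻¹ * S) ⬝ᵥ β) := by
    simp only [shsigma, shtau]
    rw [Matrix.det_one_add_mul_comm]
    rw [St6.aux_sigma hRS hSR hEu hHu β _
      (Matrix.vecMul a (sProd r (ζ ::ₘ X))⁻¹) hHdecomp]
    rw [hscr, Matrix.mul_inv_rev, ← hSdef]
    have hm : (P⁻¹ * S) * (Rz * (1 + BX * AX)⁻¹ * S) = P⁻¹ * ((1 + BX * AX)⁻¹ * S) := by
      calc (P⁻¹ * S) * (Rz * (1 + BX * AX)⁻¹ * S)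
          = P⁻¹ * (S * Rz * ((1 + BX * AX)⁻¹ * S)) := by simp only [Matrix.mul_assoc]
        _ = P⁻¹ * ((1 + BX * AX)⁻¹ * S) := by rw [hSR, Matrix.one_mul]
    rw [Matrix.vecMul_vecMul, hm, ← Matrix.vecMul_vecMul]
    rw [← hAXdef, ← hBXdef, Matrix.det_one_add_mul_comm]
  -- diagonal commutations
  have hLzQY : Lz * QY = QY * Lz := by
    rw [hLzdef, hQYdef, St6.diag_sub]
    simp only [sProd]
    exact St6.diag_mul_comm _ _
  have hQYLa : QY * La = La * QY := by
    rw [hLadef]; exact St6.mul_inv_comm hLzQY.symm hLu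
  -- step 3 : the vector gY and the key column identity
  set gY := (1 + BY * AY)⁻¹ *ᵥ β with hgYdef
  set w : Fin n → ℂ := Matrix.vecMul b (QY * La) with hwdef
  set μ : ℂ := w ⬝ᵥ (AY *ᵥ gY) with hμdef
  have hEYu : IsUnit (1 + BY * AY) := St6.isUnit_one_add_swap hiY
  have hEYd : IsUnit (1 + BY * AY).det := (Matrix.isUnit_iff_isUnit_det _).1 hEYu
  have hβ : β = gY + BY *ᵥ (AY *ᵥ gY) := by
    calc β = ((1 + BY * AY) * (1 + BY * AY)⁻¹) *ᵥ β := by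
          rw [Matrix.mul_nonsing_inv _ hEYd, Matrix.one_mulVec]
      _ = (1 + BY * AY) *ᵥ gY := by rw [← Matrix.mulVec_mulVec, hgYdef]
      _ = gY + BY *ᵥ (AY *ᵥ gY) := by
          rw [Matrix.add_mulVec, Matrix.one_mulVec, ← Matrix.mulVec_mulVec]
  have hSB : S * B = (B - S * Matrix.vecMulVec β b) * La := by
    have e1 : B = S * B * Lz + S * Matrix.vecMulVec β b := by
      calc B = (S * Rz) * B := by rw [hSR, Matrix.one_mul]
        _ = S * (B * Lz + Matrix.vecMulVec β b) := by rw [Matrix.mul_assoc, hRB]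
        _ = S * B * Lz + S * Matrix.vecMulVec β b := by
            rw [Matrix.mul_add, ← Matrix.mul_assoc]
    have e2 : S * B * Lz = B - S * Matrix.vecMulVec β b := eq_sub_of_add_eq e1.symm
    calc S * B = S * B * (Lz * La) := by rw [hLL, Matrix.mul_one]
      _ = (S * B * Lz) * La := by rw [← Matrix.mul_assoc]
      _ = (B - S * Matrix.vecMulVec β b) * La := by rw [e2]
  have hSBY : S * BY = BY * La - Matrix.vecMulVec (S *ᵥ β) w := by
    calc S * BY = (S * B) * QY := by rw [hBY, Matrix.mul_assoc]
      _ = ((B - S * Matrix.vecMulVec β b) * La) * QY := by rw [hSB]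
      _ = (B - S * Matrix.vecMulVec β b) * (QY * La) := by
          rw [Matrix.mul_assoc, ← hQYLa]
      _ = B * (QY * La) - S * (Matrix.vecMulVec β b * (QY * La)) := by
          rw [Matrix.sub_mul, Matrix.mul_assoc]
      _ = BY * La - Matrix.vecMulVec (S *ᵥ β) w := by
          rw [← Matrix.mul_assoc B, ← hBY, St6.vecMulVec_mul, St6.mul_vecMulVec, hwdef]
  have hC : (S + BY * La * AY) *ᵥ gY = (1 + μ) • (S *ᵥ β) := by
    have e3 : S *ᵥ β = (S *ᵥ gY + (BY * La) *ᵥ (AY *ᵥ gY)) - μ • (S *ᵥ β) := by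
      calc S *ᵥ β = S *ᵥ (gY + BY *ᵥ (AY *ᵥ gY)) := by rw [← hβ]
        _ = S *ᵥ gY + (S * BY) *ᵥ (AY *ᵥ gY) := by
            rw [Matrix.mulVec_add, Matrix.mulVec_mulVec (AY *ᵥ gY) S BY]
        _ = S *ᵥ gY + ((BY * La) *ᵥ (AY *ᵥ gY)
              - (Matrix.vecMulVec (S *ᵥ β) w) *ᵥ (AY *ᵥ gY)) := by
            rw [hSBY, Matrix.sub_mulVec]
        _ = (S *ᵥ gY + (BY * La) *ᵥ (AY *ᵥ gY)) - μ • (S *ᵥ β) := by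
            rw [St6.vecMulVec_mulVec, ← hμdef]; abel
    have e4 : S *ᵥ β + μ • (S *ᵥ β) = S *ᵥ gY + (BY * La) *ᵥ (AY *ᵥ gY) :=
      eq_sub_iff_add_eq.mp e3
    calc (S + BY * La * AY) *ᵥ gY
        = S *ᵥ gY + (BY * La * AY) *ᵥ gY := Matrix.add_mulVec _ _ _
      _ = S *ᵥ gY + (BY * La) *ᵥ (AY *ᵥ gY) := by rw [← Matrix.mulVec_mulVec]
      _ = S *ᵥ β + μ • (S *ᵥ β) := e4.symm
      _ = (1 + μ) • (S *ᵥ β) := by rw [add_smul, one_smul]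
  -- step 2 : tau[Y ζ̄]
  have hGY : (1 + AY * BY) * (1 + AY * BY)⁻¹ = 1 :=
    Matrix.mul_nonsing_inv _ ((Matrix.isUnit_iff_isUnit_det _).1 hiY)
  have hM2 : 1 + (AY * Rz) * (BY * La)
      = (1 + AY * BY) + Matrix.vecMulVec (AY *ᵥ β) w := by
    have e1 : (AY * Rz) * (BY * La) = AY * ((Rz * B) * (QY * La)) := by
      rw [hBY]; simp only [Matrix.mul_assoc]
    rw [e1, hRB, Matrix.add_mul]
    have e2 : (B * Lz) * (QY * La) = B * QY := by
      calc (B * Lz) * (QY * La) = B * (Lz * QY * La) := by simp only [Matrix.mul_assoc]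
        _ = B * (QY * (Lz * La)) := by rw [hLzQY, Matrix.mul_assoc]
        _ = B * QY := by rw [hLL, Matrix.mul_one]
    rw [e2, Matrix.mul_add, St6.vecMulVec_mul, St6.mul_vecMulVec, ← hBY, ← hwdef,
      ← add_assoc]
  have hτz : (1 + (AY * Rz) * (BY * La)).det = shtau l r A B Y * (1 + μ) := by
    rw [hM2, St6.det_add_vecMulVec hGY]
    have e5 : (1 + AY * BY)⁻¹ *ᵥ (AY *ᵥ β) = AY *ᵥ gY := by
      rw [Matrix.mulVec_mulVec, St6.inv_mul_eq_mul_inv hiY, ← Matrix.mulVec_mulVec,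
        ← hgYdef]
    rw [e5, ← hμdef, ← hτY]
  -- the right-hand side
  have hRHS : Matrix.vecMul (Matrix.vecMul a P⁻¹)
        ((1 + BX * AX)⁻¹ * (S + BY * La * AY) * (1 + BY * AY)⁻¹) ⬝ᵥ β
      = (1 + μ) * (Matrix.vecMul (Matrix.vecMul a P⁻¹) ((1 + BX * AX)⁻¹ * S) ⬝ᵥ β) := by
    rw [Matrix.mul_assoc, ← Matrix.vecMul_vecMul, ← dotProduct_mulVec,
      ← Matrix.mulVec_mulVec, ← hgYdef, hC, dotProduct_smul, smul_eq_mul,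
      dotProduct_mulVec, Matrix.vecMul_vecMul]
  -- assembly
  have hτX0 : shtau l r A B X ≠ 0 := by
    rw [hτX]; exact ((Matrix.isUnit_iff_isUnit_det _).1 hiX).ne_zero
  have hτY0 : shtau l r A B Y ≠ 0 := by
    rw [hτY]; exact ((Matrix.isUnit_iff_isUnit_det _).1 hiY).ne_zero
  rw [hσ, hτz, hRHS]
  field_simp
end
end
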